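/- arXiv:2301.11071 — 7 statements merged into one kernel-verified Lean document; each statement's English description precedes it below -/
import Mathlib

section
/- Let f : ℝ^n × ℝ^n → ℝ^m be a bifunction, C ⊆ ℝ^m a nontrivial closed convex pointed cone, K ⊆ ℝ^n nonempty and closed, and let x̄ ∈ Equi be a solution of the strong vector equilibrium problem. Suppose that (i) f is B-differentiable at x̄ uniformly on K, with family of B-derivatives {D_Bf(x̄,z) : z ∈ K}, and (ii) a local error bound is valid near x̄, i.e. there exist κ, δ > 0 such that dist(x, Equi) ≤ κ·ν(x) for all x ∈ B(x̄,δ) ∩ K. Then ⋂_{z∈K} (D_Bf(x̄,z))⁻¹(C) ∩ W(x̄,K) ⊆ T(x̄,Equi), where W(x̄,K) is the cone of radial directions to K at x̄ and T(x̄,Equi) is the contingent cone to Equi at x̄. -/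
open Filter Metric Set Pointwise
open scoped InnerProductSpace Topology

noncomputable section

/-- `ℝ^d` as a Euclidean space. -/
abbrev Euc (d : ℕ) := EuclideanSpace ℝ (Fin d)

/-- The contingent (Bouligand tangent) cone to `S` at `x`:
`T(x,S) = {v : ∃ vₙ → v, tₙ ↓ 0, x + tₙ vₙ ∈ S for all n}`. -/
def contCone {d : ℕ} (S : Set (Euc d)) (x : Euc d) : Set (Euc d) :=
  {v | ∃ (vs : ℕ → Euc d) (ts : ℕ → ℝ),
    Filter.Tendsto vs Filter.atTop (𝓝 v) ∧ Filter.Tendsto ts Filter.atTop (𝓝 0) ∧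
    (∀ k, 0 < ts k) ∧ ∀ k, x + ts k • vs k ∈ S}

/-- The cone of radial (weak feasible) directions to `S` at `x`:
`W(x,S) = {v : ∀ ε > 0, ∃ t ∈ (0,ε), x + t v ∈ S}`. -/
def radialCone {d : ℕ} (S : Set (Euc d)) (x : Euc d) : Set (Euc d) :=
  {v | ∀ ε > (0:ℝ), ∃ t : ℝ, 0 < t ∧ t < ε ∧ x + t • v ∈ S}

/-- The set of strong vector equilibria: `Equi = {x ∈ K : f(x,z) ∈ C for all z ∈ K}`. -/
def Equi {n m : ℕ} (f : Euc n → Euc n → Euc m) (C : Set (Euc m)) (K : Set (Euc n)) :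
    Set (Euc n) :=
  {x ∈ K | ∀ z ∈ K, f x z ∈ C}

/-- The negative dual (polar) cone `S° = {v : ⟪v,s⟫ ≤ 0 for all s ∈ S}`. -/
def negDualCone {d : ℕ} (S : Set (Euc d)) : Set (Euc d) :=
  {v | ∀ s ∈ S, ⟪v, s⟫_ℝ ≤ 0}

/-- The normal cone of convex analysis `N(x,S) = {v : ⟪v, y - x⟫ ≤ 0 for all y ∈ S}`. -/
def normalCone {d : ℕ} (S : Set (Euc d)) (x : Euc d) : Set (Euc d) :=
  {v | ∀ y ∈ S, ⟪v, y - x⟫_ℝ ≤ 0}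

/-- **Inner approximation** (Theorem 3.1): under uniform B-differentiability and a local
error bound, `⋂_{z∈K} (D_Bf(xb,z))⁻¹(C) ∩ W(xb,K) ⊆ T(xb,Equi)`. -/
theorem inner_approximation {n m : ℕ}
    (f : Euc n → Euc n → Euc m) (C : Set (Euc m)) (K : Set (Euc n))
    (hCclosed : IsClosed C) (hCconvex : Convex ℝ C)
    (hCzero : (0 : Euc m) ∈ C)
    (hCcone : ∀ c ∈ C, ∀ t : ℝ, 0 < t → t • c ∈ C)
    (hCpointed : ∀ c ∈ C, -c ∈ C → c = 0)
    (hCnontrivial : ∃ c ∈ C, c ≠ 0)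
    (hKne : K.Nonempty) (hKclosed : IsClosed K)
    (xb : Euc n) (hxb : xb ∈ Equi f C K)
    (D : Euc n → Euc n → Euc m)
    (hDcont : ∀ z ∈ K, Continuous (D z))
    (hDph : ∀ z ∈ K, ∀ t : ℝ, 0 < t → ∀ v, D z (t • v) = t • D z v)
    (hBdiff : ∀ ε > (0:ℝ), ∃ δ > (0:ℝ), ∀ x ∈ ball xb δ, ∀ z ∈ K,
      ‖f x z - f xb z - D z (x - xb)‖ ≤ ε * ‖x - xb‖)
    (hErr : ∃ κ > (0:ℝ), ∃ δ > (0:ℝ), ∀ x ∈ ball xb δ ∩ K, ∀ r : ℝ,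
      (∀ z ∈ K, infDist (f x z) C ≤ r) → infDist x (Equi f C K) ≤ κ * r)
 :
    (⋂ z ∈ K, D z ⁻¹' C) ∩ radialCone K xb ⊆ contCone (Equi f C K) xb := by
  obtain ⟨κ, hκ, δE, hδE, herr⟩ := hErr
  have hEne : (Equi f C K).Nonempty := ⟨xb, hxb⟩
  have hadd : ∀ c1 ∈ C, ∀ c2 ∈ C, c1 + c2 ∈ C := by
    intro c1 h1 c2 h2
    have h := hCconvex h1 h2 (by norm_num : (0:ℝ) ≤ 1/2) (by norm_num : (0:ℝ) ≤ 1/2)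
      (by norm_num)
    have h2' := hCcone _ h 2 (by norm_num)
    rw [smul_add, smul_smul, smul_smul] at h2'
    norm_num at h2'
    exact h2'
  rintro v ⟨hv1, hv2⟩
  have hvC : ∀ z ∈ K, D z v ∈ C := by
    intro z hz
    simpa using mem_iInter₂.mp hv1 z hz
  have key : ∀ k : ℕ, ∃ t : ℝ, ∃ y : Euc n, 0 < t ∧ t ≤ 1/(k+1) ∧ y ∈ Equi f C K ∧
      dist (t⁻¹ • (y - xb)) v ≤ (κ*‖v‖+1) * (1/(k+1)) := by
    intro k
    set ε : ℝ := 1/(k+1) with hεdef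
    have hε : 0 < ε := by positivity
    obtain ⟨δB, hδB, hB⟩ := hBdiff ε hε
    have hden : (0:ℝ) < ‖v‖ + 1 := by positivity
    set ε' : ℝ := min ε (min (δB/(‖v‖+1)) (δE/(‖v‖+1))) with hε'def
    have hε'pos : 0 < ε' := lt_min hε (lt_min (by positivity) (by positivity))
    obtain ⟨t, ht0, htε', hxK⟩ := hv2 ε' hε'pos
    have hne : t ≠ 0 := ne_of_gt ht0
    set x := xb + t • v with hxdef
    have hxsub : x - xb = t • v := by simp [hxdef]
    have hxbd : dist x xb = t * ‖v‖ := by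
      rw [dist_eq_norm, hxsub, norm_smul, Real.norm_eq_abs, abs_of_pos ht0]
    have htv : t * ‖v‖ ≤ t * (‖v‖ + 1) := by nlinarith
    have hballB : x ∈ ball xb δB := by
      rw [mem_ball, hxbd]
      have h1 : t < δB/(‖v‖+1) :=
        lt_of_lt_of_le htε' (le_trans (min_le_right _ _) (min_le_left _ _))
      have := (lt_div_iff₀ hden).mp h1
      linarith
    have hballE : x ∈ ball xb δE := by
      rw [mem_ball, hxbd]
      have h1 : t < δE/(‖v‖+1) :=
        lt_of_lt_of_le htε' (le_trans (min_le_right _ _) (min_le_right _ _))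
      have := (lt_div_iff₀ hden).mp h1
      linarith
    have hres : ∀ z ∈ K, infDist (f x z) C ≤ ε * (t * ‖v‖) := by
      intro z hz
      have hmemC : f xb z + t • D z v ∈ C :=
        hadd _ (hxb.2 z hz) _ (hCcone _ (hvC z hz) t ht0)
      calc infDist (f x z) C ≤ dist (f x z) (f xb z + t • D z v) :=
            infDist_le_dist_of_mem hmemC
        _ = ‖f x z - f xb z - D z (x - xb)‖ := by
            rw [dist_eq_norm, hxsub, hDph z hz t ht0]
            congr 1
            abel
        _ ≤ ε * ‖x - xb‖ := hB x hballB z hz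
        _ = ε * (t * ‖v‖) := by
            rw [hxsub, norm_smul, Real.norm_eq_abs, abs_of_pos ht0]
    have hinf : infDist x (Equi f C K) ≤ κ * (ε * (t * ‖v‖)) :=
      herr x ⟨hballE, hxK⟩ _ hres
    have hεt : 0 < ε * t := by positivity
    have hlt : infDist x (Equi f C K) < κ * (ε * (t * ‖v‖)) + ε * t := by linarith
    obtain ⟨y, hy, hdy⟩ := (infDist_lt_iff hEne).mp hlt
    refine ⟨t, y, ht0, le_of_lt (lt_of_lt_of_le htε' (min_le_left _ _)), hy, ?_⟩
    have heq : t⁻¹ • (y - xb) - v = t⁻¹ • (y - x) := by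
      rw [hxdef, sub_add_eq_sub_sub, smul_sub, smul_sub, inv_smul_smul₀ hne]
      rw [smul_sub]
    have hd : dist (t⁻¹ • (y - xb)) v = t⁻¹ * dist x y := by
      rw [dist_eq_norm, heq, norm_smul, Real.norm_eq_abs, abs_of_pos (inv_pos.mpr ht0)]
      rw [dist_comm, dist_eq_norm]
    rw [hd]
    have h2 : t⁻¹ * dist x y ≤ t⁻¹ * (κ * (ε * (t * ‖v‖)) + ε * t) :=
      mul_le_mul_of_nonneg_left hdy.le (inv_nonneg.mpr ht0.le)
    have h3 : t⁻¹ * (κ * (ε * (t * ‖v‖)) + ε * t) = (κ*‖v‖+1) * ε := by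
      field_simp
    rw [h3] at h2
    exact h2
  choose ts ys hts1 hts2 hys hdys using key
  refine ⟨fun k => (ts k)⁻¹ • (ys k - xb), ts, ?_, ?_, hts1, ?_⟩
  · rw [tendsto_iff_dist_tendsto_zero]
    refine squeeze_zero (fun k => dist_nonneg) hdys ?_
    have := tendsto_one_div_add_atTop_nhds_zero_nat.const_mul (κ*‖v‖+1)
    simpa using this
  · refine squeeze_zero (fun k => (hts1 k).le) hts2 ?_
    exact tendsto_one_div_add_atTop_nhds_zero_nat
  · intro k
    have : ts k • (ts k)⁻¹ • (ys k - xb) = ys k - xb :=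
      smul_inv_smul₀ (ne_of_gt (hts1 k)) _
    rw [this]
    simpa using hys k
end
end

section
/- Let f : ℝ^n × ℝ^n → ℝ^m be a bifunction, C ⊆ ℝ^m a nontrivial closed convex pointed cone, K ⊆ ℝ^n nonempty and closed, and let x̄ ∈ Equi. Suppose that (i) K is polyhedral (a finite intersection of closed affine half-spaces), (ii) f(x̄,z) = 0 for all z ∈ K, (iii) f is strictly B-differentiable at x̄ uniformly on K with family {D_Bf(x̄,z) : z ∈ K}, (iv) the family {D_Bf(x̄,z) : z ∈ K} is equicontinuous at each point of ℝ^n, and (v) a local error bound is valid near x̄, i.e. there exist κ, δ > 0 such that dist(x,Equi) ≤ κ·ν(x) for all x ∈ B(x̄,δ) ∩ K. Then T(x̄,Equi) = ⋂_{z∈K} (D_Bf(x̄,z))⁻¹(C) ∩ T(x̄,K). -/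
open Filter Metric Set Pointwise
open scoped InnerProductSpace Topology

noncomputable section

/-- A polyhedral set: a finite intersection of closed affine half-spaces. -/
def IsPolyhedral {d : ℕ} (S : Set (Euc d)) : Prop :=
  ∃ I : Finset (Euc d × ℝ), S = ⋂ p ∈ I, {x : Euc d | ⟪p.1, x⟫_ℝ ≤ p.2}

/-- **Exact tangential representation** (Corollary 3.7): under polyhedrality of `K`,
`f(xb,·) ≡ 0` on `K`, strict uniform B-differentiability, equicontinuity and a local
error bound, `T(xb,Equi) = ⋂_{z∈K} (D_Bf(xb,z))⁻¹(C) ∩ T(xb,K)`. -/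
theorem exact_tangent_representation {n m : ℕ}
    (f : Euc n → Euc n → Euc m) (C : Set (Euc m)) (K : Set (Euc n))
    (hCclosed : IsClosed C) (hCconvex : Convex ℝ C)
    (hCzero : (0 : Euc m) ∈ C)
    (hCcone : ∀ c ∈ C, ∀ t : ℝ, 0 < t → t • c ∈ C)
    (hCpointed : ∀ c ∈ C, -c ∈ C → c = 0)
    (hCnontrivial : ∃ c ∈ C, c ≠ 0)
    (hKne : K.Nonempty) (hKclosed : IsClosed K)
    (xb : Euc n) (hxb : xb ∈ Equi f C K)
    (hKpoly : IsPolyhedral K)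
    (hfzero : ∀ z ∈ K, f xb z = 0)
    (D : Euc n → Euc n → Euc m)
    (hDcont : ∀ z ∈ K, Continuous (D z))
    (hDph : ∀ z ∈ K, ∀ t : ℝ, 0 < t → ∀ v, D z (t • v) = t • D z v)
    (hStrict : ∀ ε > (0:ℝ), ∃ δ > (0:ℝ), ∀ x₁ ∈ ball xb δ, ∀ x₂ ∈ ball xb δ, ∀ z ∈ K,
      ‖f x₁ z - f x₂ z - D z (x₁ - x₂)‖ ≤ ε * ‖x₁ - x₂‖)
    (hEqui : Equicontinuous (fun z : {z // z ∈ K} => D z.1))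
    (hErr : ∃ κ > (0:ℝ), ∃ δ > (0:ℝ), ∀ x ∈ ball xb δ ∩ K, ∀ r : ℝ,
      (∀ z ∈ K, infDist (f x z) C ≤ r) → infDist x (Equi f C K) ≤ κ * r)
 :
    contCone (Equi f C K) xb = (⋂ z ∈ K, D z ⁻¹' C) ∩ contCone K xb := by

  obtain ⟨κ, hκ, δE, hδE, herr⟩ := hErr
  apply Set.Subset.antisymm
  · -- forward inclusion
    rintro v ⟨vs, ts, hvs, hts, htpos, hmem⟩
    have hvK : v ∈ contCone K xb := ⟨vs, ts, hvs, hts, htpos, fun k => (hmem k).1⟩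
    refine ⟨?_, hvK⟩
    simp only [Set.mem_iInter, Set.mem_preimage]
    intro z hz
    have hkey : ∀ ε > (0:ℝ), infDist (D z v) C ≤ ε := by
      intro ε hε
      set ε' := ε / (‖v‖ + 2) with hε'def
      have hε'pos : 0 < ε' := div_pos hε (by positivity)
      obtain ⟨δ, hδ, hst⟩ := hStrict ε' hε'pos
      have hnorm : Tendsto (fun k => ts k * ‖vs k‖) atTop (𝓝 0) := by
        have := hts.mul hvs.norm
        simpa using this
      have hev1 : ∀ᶠ k in atTop, ts k * ‖vs k‖ < δ := hnorm.eventually_lt_const hδ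
      have hev2 : ∀ᶠ k in atTop, ‖vs k‖ < ‖v‖ + 1 :=
        hvs.norm.eventually_lt_const (lt_add_one _)
      have hevle : ∀ᶠ k in atTop, infDist (D z (vs k)) C ≤ ε := by
        filter_upwards [hev1, hev2] with k h1 h2
        set t := ts k with htdef
        have ht : 0 < t := htpos k
        set x := xb + t • vs k with hxdef
        have hxball : x ∈ ball xb δ := by
          rw [mem_ball, dist_eq_norm]
          have : x - xb = t • vs k := by rw [hxdef]; abel
          rw [this, norm_smul, Real.norm_eq_abs, abs_of_pos ht]
          exact h1
        have hb := hst x hxball xb (mem_ball_self hδ) z hz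
        rw [hfzero z hz, sub_zero] at hb
        have hxsub : x - xb = t • vs k := by rw [hxdef]; abel
        rw [hxsub, hDph z hz t ht, norm_smul, Real.norm_eq_abs, abs_of_pos ht] at hb
        -- hb : ‖f x z - t • D z (vs k)‖ ≤ ε' * (t * ‖vs k‖)
        have hfC : f x z ∈ C := (hmem k).2 z hz
        have hmemC : t⁻¹ • f x z ∈ C := hCcone _ hfC t⁻¹ (inv_pos.mpr ht)
        have hdist : infDist (D z (vs k)) C ≤ dist (D z (vs k)) (t⁻¹ • f x z) :=
          infDist_le_dist_of_mem hmemC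
        have heq : D z (vs k) - t⁻¹ • f x z = t⁻¹ • (t • D z (vs k) - f x z) := by
          rw [smul_sub, smul_smul, inv_mul_cancel₀ ht.ne', one_smul]
        have hdist2 : dist (D z (vs k)) (t⁻¹ • f x z) = t⁻¹ * ‖f x z - t • D z (vs k)‖ := by
          rw [dist_eq_norm, heq, norm_smul, Real.norm_eq_abs, abs_of_pos (inv_pos.mpr ht),
            norm_sub_rev]
        have hle1 : infDist (D z (vs k)) C ≤ t⁻¹ * (ε' * (t * ‖vs k‖)) := by
          rw [hdist2] at hdist
          exact hdist.trans (by
            apply mul_le_mul_of_nonneg_left hb (le_of_lt (inv_pos.mpr ht)))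
        have heq2 : t⁻¹ * (ε' * (t * ‖vs k‖)) = ε' * ‖vs k‖ := by
          field_simp
        rw [heq2] at hle1
        refine hle1.trans ?_
        have h3 : ε' * ‖vs k‖ ≤ ε' * (‖v‖ + 1) :=
          mul_le_mul_of_nonneg_left h2.le hε'pos.le
        refine h3.trans ?_
        rw [hε'def, div_mul_eq_mul_div, div_le_iff₀ (by positivity : (0:ℝ) < ‖v‖ + 2)]
        nlinarith [norm_nonneg v, hε.le]
      have htend : Tendsto (fun k => infDist (D z (vs k)) C) atTop (𝓝 (infDist (D z v) C)) := by
        have h1 : Tendsto (fun k => D z (vs k)) atTop (𝓝 (D z v)) :=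
          ((hDcont z hz).tendsto v).comp hvs
        exact ((continuous_infDist_pt C).tendsto (D z v)).comp h1
      exact le_of_tendsto htend hevle
    have hzero : infDist (D z v) C = 0 := by
      have h0 : infDist (D z v) C ≤ 0 := by
        refine le_of_forall_pos_le_add ?_
        intro ε hε
        simpa using hkey ε hε
      exact le_antisymm h0 infDist_nonneg
    exact ((hCclosed.mem_iff_infDist_zero ⟨0, hCzero⟩).mpr hzero)
  · -- reverse inclusion
    rintro v ⟨hvC, hvT⟩
    simp only [Set.mem_iInter, Set.mem_preimage] at hvC
    have hxbK : xb ∈ K := hxb.1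
    -- Step 1: radial directions for polyhedral K
    have hrad : ∀ᶠ t in 𝓝[>] (0:ℝ), xb + t • v ∈ K := by
      obtain ⟨I, hI⟩ := hKpoly
      have hmemI : ∀ x : Euc n, x ∈ K ↔ ∀ p ∈ I, ⟪p.1, x⟫_ℝ ≤ p.2 := by
        intro x; rw [hI]; simp [Set.mem_iInter]
      have : ∀ p ∈ I, ∀ᶠ t in 𝓝[>] (0:ℝ), ⟪p.1, xb + t • v⟫_ℝ ≤ p.2 := by
        intro p hp
        have hxble : ⟪p.1, xb⟫_ℝ ≤ p.2 := (hmemI xb).mp hxbK p hp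
        rcases le_or_gt ⟪p.1, v⟫_ℝ 0 with hpv | hpv
        · refine Filter.eventually_of_mem self_mem_nhdsWithin (fun t ht => ?_)
          have ht' : (0:ℝ) < t := ht
          rw [inner_add_right, real_inner_smul_right]
          nlinarith
        · -- then ⟪p.1, xb⟫ < p.2
          have hlt : ⟪p.1, xb⟫_ℝ < p.2 := by
            rcases lt_or_eq_of_le hxble with h | h
            · exact h
            · exfalso
              obtain ⟨vs, ts, hvs, hts, htpos, hmemK⟩ := hvT
              have hle : ∀ k, ⟪p.1, vs k⟫_ℝ ≤ 0 := by
                intro k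
                have := (hmemI _).mp (hmemK k) p hp
                rw [inner_add_right, real_inner_smul_right, h] at this
                nlinarith [htpos k]
              have htendinner : Tendsto (fun k => ⟪p.1, vs k⟫_ℝ) atTop (𝓝 ⟪p.1, v⟫_ℝ) :=
                ((continuous_const.inner continuous_id).tendsto v).comp hvs
              have := le_of_tendsto htendinner (Filter.Eventually.of_forall hle)
              linarith
          have hcont : Tendsto (fun t : ℝ => ⟪p.1, xb + t • v⟫_ℝ) (𝓝[>] 0) (𝓝 ⟪p.1, xb⟫_ℝ) := by
            have hc : Continuous (fun t : ℝ => ⟪p.1, xb + t • v⟫_ℝ) :=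
              continuous_const.inner (continuous_const.add (continuous_id.smul continuous_const))
            have := hc.tendsto' 0 ⟪p.1, xb⟫_ℝ (by simp)
            exact this.mono_left nhdsWithin_le_nhds
          exact (hcont.eventually_lt_const hlt).mono (fun t h => h.le)
      have hall := (Filter.eventually_all_finset I).mpr this
      exact hall.mono (fun t h => (hmemI _).mpr h)
    -- Step 2: main approximation claim
    have main : ∀ η > (0:ℝ), ∃ t : ℝ, ∃ y : Euc n, 0 < t ∧ t < η ∧ y ∈ Equi f C K ∧
        ‖y - (xb + t • v)‖ ≤ η * t := by
      intro η hη
      set ε' := η / (2 * κ * (‖v‖ + 1)) with hε'def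
      have hε'pos : 0 < ε' := by positivity
      obtain ⟨δs, hδs, hst⟩ := hStrict ε' hε'pos
      have htid : Tendsto (fun t : ℝ => t) (𝓝[>] (0:ℝ)) (𝓝 0) :=
        tendsto_id.mono_left nhdsWithin_le_nhds
      have hev1 : ∀ᶠ t in 𝓝[>] (0:ℝ), t < η := htid.eventually_lt_const hη
      have htn : Tendsto (fun t : ℝ => t * ‖v‖) (𝓝[>] (0:ℝ)) (𝓝 0) := by
        have := htid.mul_const ‖v‖
        simpa using this
      have hev2 : ∀ᶠ t in 𝓝[>] (0:ℝ), t * ‖v‖ < min δs δE :=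
        htn.eventually_lt_const (lt_min hδs hδE)
      have hev3 : ∀ᶠ t in 𝓝[>] (0:ℝ), (0:ℝ) < t :=
        Filter.eventually_of_mem self_mem_nhdsWithin (fun t ht => ht)
      obtain ⟨t, hK', ht1, ht2, ht0⟩ := (hrad.and (hev1.and (hev2.and hev3))).exists
      set x := xb + t • v with hxdef
      have hxsub : x - xb = t • v := by rw [hxdef]; abel
      have hnx : ‖x - xb‖ = t * ‖v‖ := by
        rw [hxsub, norm_smul, Real.norm_eq_abs, abs_of_pos ht0]
      have hxballE : x ∈ ball xb δE := by
        rw [mem_ball, dist_eq_norm, hnx]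
        exact lt_of_lt_of_le ht2 (min_le_right _ _)
      have hxballs : x ∈ ball xb δs := by
        rw [mem_ball, dist_eq_norm, hnx]
        exact lt_of_lt_of_le ht2 (min_le_left _ _)
      have hbound : ∀ z ∈ K, infDist (f x z) C ≤ ε' * (t * ‖v‖) := by
        intro z hz
        have hb := hst x hxballs xb (mem_ball_self hδs) z hz
        rw [hfzero z hz, sub_zero, hxsub, hDph z hz t ht0, norm_smul, Real.norm_eq_abs, abs_of_pos ht0] at hb
        have hmemC : t • D z v ∈ C := hCcone _ (hvC z hz) t ht0
        calc infDist (f x z) C ≤ dist (f x z) (t • D z v) := infDist_le_dist_of_mem hmemC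
          _ = ‖f x z - t • D z v‖ := dist_eq_norm _ _
          _ ≤ ε' * (t * ‖v‖) := hb
      have hinf := herr x ⟨hxballE, hK'⟩ (ε' * (t * ‖v‖)) hbound
      have hlt : infDist x (Equi f C K) < η * t := by
        refine lt_of_le_of_lt hinf ?_
        have : κ * (ε' * (t * ‖v‖)) = η * t * (κ * ‖v‖ / (2 * κ * (‖v‖ + 1))) := by
          rw [hε'def]; field_simp
        rw [this]
        have hfrac : κ * ‖v‖ / (2 * κ * (‖v‖ + 1)) < 1 := by
          rw [div_lt_one (by positivity)]
          nlinarith [norm_nonneg v]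
        nlinarith [mul_pos hη ht0]
      obtain ⟨y, hy, hdy⟩ := (infDist_lt_iff ⟨xb, hxb⟩).mp hlt
      refine ⟨t, y, ht0, ht1, hy, ?_⟩
      rw [← hxdef]
      have : ‖y - x‖ = dist x y := by rw [dist_comm, dist_eq_norm]
      rw [this]
      exact hdy.le
    -- Step 3: build the sequence
    have hchoice : ∀ k : ℕ, ∃ t : ℝ, ∃ y : Euc n, 0 < t ∧ t < 1/(k+1:ℝ) ∧
        y ∈ Equi f C K ∧ ‖y - (xb + t • v)‖ ≤ (1/(k+1:ℝ)) * t := by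
      intro k
      exact main (1/(k+1:ℝ)) (by positivity)
    choose ts ys htpos htlt hymem hyclose using hchoice
    refine ⟨fun k => (ts k)⁻¹ • (ys k - xb), ts, ?_, ?_, htpos, ?_⟩
    · -- vs → v
      rw [tendsto_iff_norm_sub_tendsto_zero]
      have hb : ∀ k : ℕ, ‖(ts k)⁻¹ • (ys k - xb) - v‖ ≤ 1/(k+1:ℝ) := by
        intro k
        have ht := htpos k
        have heq : (ts k)⁻¹ • (ys k - xb) - v = (ts k)⁻¹ • (ys k - (xb + ts k • v)) := by
          rw [smul_sub, smul_sub, smul_add, smul_smul, inv_mul_cancel₀ ht.ne', one_smul]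
          abel
        rw [heq, norm_smul, Real.norm_eq_abs, abs_of_pos (inv_pos.mpr ht)]
        calc (ts k)⁻¹ * ‖ys k - (xb + ts k • v)‖
            ≤ (ts k)⁻¹ * ((1/(k+1:ℝ)) * ts k) :=
              mul_le_mul_of_nonneg_left (hyclose k) (inv_pos.mpr ht).le
          _ = 1/(k+1:ℝ) := by field_simp
      refine squeeze_zero (fun k => norm_nonneg _) hb ?_
      exact tendsto_one_div_add_atTop_nhds_zero_nat
    · -- ts → 0
      refine squeeze_zero (fun k => (htpos k).le) (fun k => (htlt k).le) ?_
      exact tendsto_one_div_add_atTop_nhds_zero_nat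
    · intro k
      have : xb + ts k • (ts k)⁻¹ • (ys k - xb) = ys k := by
        rw [smul_smul, mul_inv_cancel₀ (htpos k).ne', one_smul]
        abel
      rw [this]
      exact hymem k
end
end

section
/- Let f : ℝ^n × ℝ^n → ℝ^m be a bifunction, C ⊆ ℝ^m a nontrivial closed convex pointed cone, K ⊆ ℝ^n nonempty and closed, and let ϑ : ℝ^n → ℝ be continuous around x̄ ∈ Equi. Suppose x̄ is a local minimizer of ϑ over Equi, (i) f is B-differentiable at x̄ uniformly on K with family {D_Bf(x̄,z) : z ∈ K}, and (ii) a local error bound is valid near x̄ (∃ κ, δ > 0 with dist(x,Equi) ≤ κ·ν(x) for all x ∈ B(x̄,δ) ∩ K). Then −∂^+ϑ(x̄) ⊆ (⋂_{z∈K} (D_Bf(x̄,z))⁻¹(C) ∩ W(x̄,K))°, where S° denotes the negative dual cone of S and ∂^+ϑ(x̄) is the Fréchet upper subdifferential of ϑ at x̄. -/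
open Filter Metric Set Pointwise
open scoped InnerProductSpace Topology

noncomputable section

/-- Dini upper directional derivative (with values in `EReal`). -/
def diniUpper {d : ℕ} (ϑ : Euc d → ℝ) (x w : Euc d) : EReal :=
  Filter.limsup (fun t : ℝ => (((ϑ (x + t • w) - ϑ x) / t : ℝ) : EReal)) (𝓝[>] (0:ℝ))

/-- Dini lower directional derivative (with values in `EReal`). -/
def diniLower {d : ℕ} (ϑ : Euc d → ℝ) (x w : Euc d) : EReal :=
  Filter.liminf (fun t : ℝ => (((ϑ (x + t • w) - ϑ x) / t : ℝ) : EReal)) (𝓝[>] (0:ℝ))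

/-- Dini–Hadamard upper directional derivative (with values in `EReal`). -/
def dhUpper {d : ℕ} (ϑ : Euc d → ℝ) (x w : Euc d) : EReal :=
  Filter.limsup (fun p : Euc d × ℝ => (((ϑ (x + p.2 • p.1) - ϑ x) / p.2 : ℝ) : EReal))
    ((𝓝 w) ×ˢ (𝓝[>] (0:ℝ)))

/-- Dini–Hadamard lower directional derivative (with values in `EReal`). -/
def dhLower {d : ℕ} (ϑ : Euc d → ℝ) (x w : Euc d) : EReal :=
  Filter.liminf (fun p : Euc d × ℝ => (((ϑ (x + p.2 • p.1) - ϑ x) / p.2 : ℝ) : EReal))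
    ((𝓝 w) ×ˢ (𝓝[>] (0:ℝ)))

/-- Fréchet upper subdifferential of a real-valued function. -/
def upperSubdiff {d : ℕ} (ϑ : Euc d → ℝ) (x : Euc d) : Set (Euc d) :=
  {v | Filter.limsup
      (fun y => (((ϑ y - ϑ x - ⟪v, y - x⟫_ℝ) / ‖y - x‖ : ℝ) : EReal)) (𝓝[≠] x) ≤ 0}

/-- Fréchet regular (lower) subdifferential of a real-valued function. -/
def regularSubdiff {d : ℕ} (ϑ : Euc d → ℝ) (x : Euc d) : Set (Euc d) :=
  {v | 0 ≤ Filter.liminf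
      (fun y => (((ϑ y - ϑ x - ⟪v, y - x⟫_ℝ) / ‖y - x‖ : ℝ) : EReal)) (𝓝[≠] x)}

set_option maxHeartbeats 1600000 in
/-- **Necessary optimality condition** (Theorem 4.3): if `xb` locally minimizes `ϑ` over
`Equi`, then `-∂⁺ϑ(xb) ⊆ (⋂_{z∈K} (D_Bf(xb,z))⁻¹(C) ∩ W(xb,K))°`. -/
theorem necessary_optimality_condition {n m : ℕ}
    (f : Euc n → Euc n → Euc m) (C : Set (Euc m)) (K : Set (Euc n))
    (hCclosed : IsClosed C) (hCconvex : Convex ℝ C)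
    (hCzero : (0 : Euc m) ∈ C)
    (hCcone : ∀ c ∈ C, ∀ t : ℝ, 0 < t → t • c ∈ C)
    (hCpointed : ∀ c ∈ C, -c ∈ C → c = 0)
    (hCnontrivial : ∃ c ∈ C, c ≠ 0)
    (hKne : K.Nonempty) (hKclosed : IsClosed K)
    (ϑ : Euc n → ℝ) (xb : Euc n) (hxb : xb ∈ Equi f C K)
    (hcont : ∃ U ∈ 𝓝 xb, ContinuousOn ϑ U)
    (hmin : ∃ U ∈ 𝓝 xb, ∀ x ∈ Equi f C K ∩ U, ϑ xb ≤ ϑ x)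
    (D : Euc n → Euc n → Euc m)
    (hDcont : ∀ z ∈ K, Continuous (D z))
    (hDph : ∀ z ∈ K, ∀ t : ℝ, 0 < t → ∀ v, D z (t • v) = t • D z v)
    (hBdiff : ∀ ε > (0:ℝ), ∃ δ > (0:ℝ), ∀ x ∈ ball xb δ, ∀ z ∈ K,
      ‖f x z - f xb z - D z (x - xb)‖ ≤ ε * ‖x - xb‖)
    (hErr : ∃ κ > (0:ℝ), ∃ δ > (0:ℝ), ∀ x ∈ ball xb δ ∩ K, ∀ r : ℝ,
      (∀ z ∈ K, infDist (f x z) C ≤ r) → infDist x (Equi f C K) ≤ κ * r)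
 :
    -upperSubdiff ϑ xb ⊆ negDualCone ((⋂ z ∈ K, D z ⁻¹' C) ∩ radialCone K xb) := by
  rintro v hv w hw
  rw [Set.mem_neg] at hv
  obtain ⟨hw1, hw2⟩ := hw
  have hw1' : ∀ z ∈ K, D z w ∈ C := by
    intro z hz
    have := Set.mem_iInter₂.mp hw1 z hz
    exact this
  have hw2' : ∀ e > (0:ℝ), ∃ t : ℝ, 0 < t ∧ t < e ∧ xb + t • w ∈ K := hw2
  obtain ⟨κ, hκ, δ₂, hδ₂, herr⟩ := hErr
  obtain ⟨U, hU, hminU⟩ := hmin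
  obtain ⟨δ₃, hδ₃, hballU⟩ := Metric.mem_nhds_iff.mp hU
  set A : ℝ := ‖w‖ * (1 + κ) + 1 with hA
  have hApos : 0 < A := by positivity
  set M : ℝ := A * (1 + ‖v‖) with hM
  have hMpos : 0 < M := by positivity
  have key : ∀ ε : ℝ, 0 < ε → ε ≤ 1 → ⟪v, w⟫_ℝ ≤ ε * M := by
    intro ε hε hε1
    obtain ⟨δ₁, hδ₁, hB⟩ := hBdiff ε hε
    -- from upper subdifferential: a local linear upper estimate
    have hsub : ∀ᶠ y in 𝓝[≠] xb,
        ((((ϑ y - ϑ xb - ⟪-v, y - xb⟫_ℝ) / ‖y - xb‖ : ℝ) : EReal)) < (ε : EReal) := by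
      refine Filter.eventually_lt_of_limsup_lt (lt_of_le_of_lt hv (by exact_mod_cast hε)) ?_
      isBoundedDefault
    rw [eventually_nhdsWithin_iff, Metric.eventually_nhds_iff] at hsub
    obtain ⟨ρ, hρ, hsub⟩ := hsub
    have hsub' : ∀ y : Euc n, dist y xb < ρ →
        ϑ y - ϑ xb - ⟪-v, y - xb⟫_ℝ ≤ ε * ‖y - xb‖ := by
      intro y hy
      by_cases hyx : y = xb
      · subst hyx; simp
      · have h1 := hsub hy (by simpa using hyx)
        have hnorm : 0 < ‖y - xb‖ := by rwa [norm_pos_iff, sub_ne_zero]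
        have h2 : (ϑ y - ϑ xb - ⟪-v, y - xb⟫_ℝ) / ‖y - xb‖ < ε := by exact_mod_cast h1
        have := (div_lt_iff₀ hnorm).mp h2
        linarith [this]
    -- choose t small
    have hwpos : (0:ℝ) < ‖w‖ + 1 := by positivity
    set e : ℝ := min (min (δ₁ / (‖w‖ + 1)) (δ₂ / (‖w‖ + 1))) (min (ρ / A) (δ₃ / A)) with he
    have hepos : 0 < e := by
      apply lt_min <;> apply lt_min <;> positivity
    obtain ⟨t, ht0, hte, htK⟩ := hw2' e hepos
    set x : Euc n := xb + t • w with hx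
    have hxsub : x - xb = t • w := by simp [hx]
    have hdistx : dist x xb = t * ‖w‖ := by
      rw [dist_eq_norm, hxsub, norm_smul, Real.norm_eq_abs, abs_of_pos ht0]
    have htw1 : t * ‖w‖ < δ₁ := by
      have h1 : t < δ₁ / (‖w‖ + 1) := lt_of_lt_of_le hte (le_trans (min_le_left _ _) (min_le_left _ _))
      have := (lt_div_iff₀ hwpos).mp h1
      nlinarith [norm_nonneg w]
    have htw2 : t * ‖w‖ < δ₂ := by
      have h1 : t < δ₂ / (‖w‖ + 1) := lt_of_lt_of_le hte (le_trans (min_le_left _ _) (min_le_right _ _))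
      have := (lt_div_iff₀ hwpos).mp h1
      nlinarith [norm_nonneg w]
    have htρ : t * A < ρ := by
      have h1 : t < ρ / A := lt_of_lt_of_le hte (le_trans (min_le_right _ _) (min_le_left _ _))
      exact (lt_div_iff₀ hApos).mp h1
    have htδ₃ : t * A < δ₃ := by
      have h1 : t < δ₃ / A := lt_of_lt_of_le hte (le_trans (min_le_right _ _) (min_le_right _ _))
      exact (lt_div_iff₀ hApos).mp h1
    have hx1 : x ∈ ball xb δ₁ := by rw [mem_ball, hdistx]; exact htw1
    have hx2 : x ∈ ball xb δ₂ := by rw [mem_ball, hdistx]; exact htw2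
    -- residual estimate
    have hres : ∀ z ∈ K, infDist (f x z) C ≤ ε * (t * ‖w‖) := by
      intro z hz
      have hc1 : f xb z ∈ C := hxb.2 z hz
      have hc2 : t • D z w ∈ C := hCcone _ (hw1' z hz) t ht0
      have hmid : (1/2 : ℝ) • f xb z + (1/2 : ℝ) • (t • D z w) ∈ C :=
        hCconvex hc1 hc2 (by norm_num) (by norm_num) (by norm_num)
      have hcsum : f xb z + t • D z w ∈ C := by
        have := hCcone _ hmid 2 (by norm_num)
        simpa [smul_add, smul_smul] using this
      have hle : infDist (f x z) C ≤ dist (f x z) (f xb z + t • D z w) :=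
        infDist_le_dist_of_mem hcsum
      have hDz : D z (x - xb) = t • D z w := by rw [hxsub, hDph z hz t ht0]
      have hdist2 : dist (f x z) (f xb z + t • D z w) = ‖f x z - f xb z - D z (x - xb)‖ := by
        rw [hDz, dist_eq_norm, sub_add_eq_sub_sub]
      have hbd := hB x hx1 z hz
      have hnx : ‖x - xb‖ = t * ‖w‖ := by
        rw [hxsub, norm_smul, Real.norm_eq_abs, abs_of_pos ht0]
      rw [hnx] at hbd
      rw [hdist2] at hle
      linarith
    -- error bound
    have hinf : infDist x (Equi f C K) ≤ κ * (ε * (t * ‖w‖)) :=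
      herr x ⟨hx2, htK⟩ (ε * (t * ‖w‖)) hres
    have hEne : (Equi f C K).Nonempty := ⟨xb, hxb⟩
    have hlt : infDist x (Equi f C K) < ε * t * (κ * ‖w‖ + 1) := by nlinarith
    obtain ⟨y, hyE, hxy⟩ := (Metric.infDist_lt_iff hEne).mp hlt
    -- y is near xb
    have hyxb : ‖y - xb‖ < t * A := by
      have h1 : ‖y - xb‖ ≤ ‖y - x‖ + ‖x - xb‖ := norm_sub_le_norm_sub_add_norm_sub y x xb
      have h2 : ‖y - x‖ = dist x y := by rw [dist_comm, dist_eq_norm]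
      have h3 : ‖x - xb‖ = t * ‖w‖ := by rw [← dist_eq_norm, hdistx]
      have het : ε * t ≤ t := by nlinarith
      have h4 : ε * t * (κ * ‖w‖ + 1) ≤ t * (κ * ‖w‖ + 1) :=
        mul_le_mul_of_nonneg_right het (by positivity)
      have h5 : t * (κ * ‖w‖ + 1) + t * ‖w‖ = t * A := by rw [hA]; ring
      linarith
    have hyρ : dist y xb < ρ := by rw [dist_eq_norm]; exact lt_trans hyxb htρ
    have hyU : y ∈ U := hballU (by rw [mem_ball, dist_eq_norm]; exact lt_trans hyxb htδ₃)
    have hϑ : ϑ xb ≤ ϑ y := hminU y ⟨hyE, hyU⟩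
    have hsy := hsub' y hyρ
    rw [inner_neg_left] at hsy
    -- ⟪v, y - xb⟫ ≤ ε * t * A
    have hvy : ⟪v, y - xb⟫_ℝ ≤ ε * (t * A) := by
      have h1 : ⟪v, y - xb⟫_ℝ ≤ ε * ‖y - xb‖ := by linarith
      have h2 : ε * ‖y - xb‖ ≤ ε * (t * A) := mul_le_mul_of_nonneg_left hyxb.le hε.le
      linarith
    have hvxy : ⟪v, x - y⟫_ℝ ≤ ‖v‖ * (ε * (t * A)) := by
      have h1 : ⟪v, x - y⟫_ℝ ≤ ‖v‖ * ‖x - y‖ := real_inner_le_norm v (x - y)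
      have h2 : ‖x - y‖ < ε * t * (κ * ‖w‖ + 1) := by rwa [← dist_eq_norm]
      have h3 : ε * t * (κ * ‖w‖ + 1) ≤ ε * (t * A) := by
        rw [hA]
        nlinarith [mul_nonneg (mul_nonneg hε.le ht0.le) (norm_nonneg w)]
      have h4 : ‖v‖ * ‖x - y‖ ≤ ‖v‖ * (ε * (t * A)) :=
        mul_le_mul_of_nonneg_left (le_trans h2.le h3) (norm_nonneg v)
      linarith
    have hsplit : ⟪v, y - xb⟫_ℝ + ⟪v, x - y⟫_ℝ = t * ⟪v, w⟫_ℝ := by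
      rw [← inner_add_right]
      have : y - xb + (x - y) = t • w := by rw [← hxsub]; abel
      rw [this, real_inner_smul_right]
    have hfin : t * ⟪v, w⟫_ℝ ≤ t * (ε * M) := by
      have hid : ε * (t * A) + ‖v‖ * (ε * (t * A)) = t * (ε * M) := by rw [hM]; ring
      linarith
    exact le_of_mul_le_mul_left hfin ht0
  -- conclude ⟪v, w⟫ ≤ 0
  by_contra hcon
  push_neg at hcon
  set a := ⟪v, w⟫_ℝ with ha
  set ε : ℝ := min 1 (a / (2 * M)) with hε
  have hεpos : 0 < ε := lt_min one_pos (div_pos hcon (by positivity))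
  have hε1 : ε ≤ 1 := min_le_left _ _
  have h1 := key ε hεpos hε1
  have h2 : ε * M ≤ (a / (2 * M)) * M := by
    apply mul_le_mul_of_nonneg_right (min_le_right _ _) hMpos.le
  have h3 : (a / (2 * M)) * M = a / 2 := by field_simp
  linarith
end
end

section
/- Let f : ℝ^n × ℝ^n → ℝ^m be a bifunction, C ⊆ ℝ^m a nontrivial closed convex pointed cone, K ⊆ ℝ^n nonempty and closed, and let ϑ : ℝ^n → ℝ be continuous around x̄ ∈ Equi with x̄ a local minimizer of ϑ over Equi. Assume f is B-differentiable at x̄ uniformly on K with family {D_Bf(x̄,z) : z ∈ K} and a local error bound is valid near x̄. Assume additionally: (i) K is polyhedral; (ii) each D_Bf(x̄,z) is C-concave, i.e. D_Bf(x̄,z)(v₁) + D_Bf(x̄,z)(v₂) ≤_C D_Bf(x̄,z)(v₁+v₂) for all v₁, v₂ ∈ ℝ^n; and (iii) the qualification condition ⋂_{z∈K} (D_Bf(x̄,z))⁻¹(C) ∩ int T(x̄,K) ≠ ∅ holds. Then −∂^+ϑ(x̄) ⊆ (⋂_{z∈K} (D_Bf(x̄,z))⁻¹(C))° + N(x̄,K),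 where N(x̄,K) is the normal cone of convex analysis to K at x̄. -/
open Filter Metric Set Pointwise
open scoped InnerProductSpace Topology

noncomputable section

namespace CorAux

variable {d : ℕ}

lemma negDual_isClosed (S : Set (Euc d)) : IsClosed (negDualCone S) := by
  have h : negDualCone S = ⋂ s ∈ S, {v : Euc d | ⟪v, s⟫_ℝ ≤ 0} := by
    ext v; simp [negDualCone]
  rw [h]
  exact isClosed_biInter fun s _ =>
    isClosed_le (Continuous.inner continuous_id continuous_const) continuous_const

lemma negDual_zero_mem (S : Set (Euc d)) : (0 : Euc d) ∈ negDualCone S := by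
  intro s _; simp

lemma negDual_convex (S : Set (Euc d)) : Convex ℝ (negDualCone S) := by
  intro x hx y hy a b ha hb _
  intro s hs
  have hx' := hx s hs
  have hy' := hy s hs
  rw [inner_add_left, real_inner_smul_left, real_inner_smul_left]
  nlinarith [mul_nonneg ha (neg_nonneg.mpr hx'), mul_nonneg hb (neg_nonneg.mpr hy')]

lemma negDual_cone {S : Set (Euc d)} {v : Euc d} (hv : v ∈ negDualCone S)
    {t : ℝ} (ht : 0 < t) : t • v ∈ negDualCone S := by
  intro s hs
  rw [real_inner_smul_left]
  exact mul_nonpos_of_nonneg_of_nonpos ht.le (hv s hs)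

lemma subset_negDual_negDual (S : Set (Euc d)) : S ⊆ negDualCone (negDualCone S) := by
  intro s hs v hv
  rw [real_inner_comm]
  exact hv s hs

lemma bipolar (S : Set (Euc d)) (h0 : (0 : Euc d) ∈ S) (hconv : Convex ℝ S)
    (hcone : ∀ s ∈ S, ∀ t : ℝ, 0 < t → t • s ∈ S) (hcl : IsClosed S) :
    negDualCone (negDualCone S) = S := by
  refine Subset.antisymm ?_ (subset_negDual_negDual S)
  intro x hx
  by_contra hxS
  obtain ⟨f, u, hfu, hux⟩ := geometric_hahn_banach_closed_point hconv hcl hxS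
  have hu0 : 0 < u := by simpa using hfu 0 h0
  have hfle : ∀ s ∈ S, f s ≤ 0 := by
    intro s hs
    by_contra h
    push_neg at h
    have h2 : ((u + 1) / f s) • s ∈ S := hcone s hs _ (div_pos (by linarith) h)
    have h3 := hfu _ h2
    rw [map_smul, smul_eq_mul, div_mul_cancel₀ _ (ne_of_gt h)] at h3
    linarith
  set y := (InnerProductSpace.toDual ℝ (Euc d)).symm f with hy
  have hyz : ∀ z : Euc d, ⟪y, z⟫_ℝ = f z := fun z =>
    InnerProductSpace.toDual_symm_apply
  have hyS : y ∈ negDualCone S := by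
    intro s hs; rw [hyz]; exact hfle s hs
  have := hx y hyS
  rw [real_inner_comm, hyz] at this
  linarith

lemma negDual_add (X Y : Set (Euc d)) (h0X : (0 : Euc d) ∈ X) (h0Y : (0 : Euc d) ∈ Y) :
    negDualCone (X + Y) = negDualCone X ∩ negDualCone Y := by
  ext v
  constructor
  · intro hv
    constructor
    · intro x hx
      exact hv x (by exact ⟨x, hx, 0, h0Y, add_zero x⟩)
    · intro y hy
      exact hv y (by exact ⟨0, h0X, y, hy, zero_add y⟩)
  · rintro ⟨h1, h2⟩ s hs
    obtain ⟨x, hx, y, hy, rfl⟩ := hs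
    rw [inner_add_right]
    exact add_nonpos (h1 x hx) (h2 y hy)

lemma closed_sum_negDual (A T : Set (Euc d)) (w0 : Euc d) (hw0A : w0 ∈ A)
    (hw0T : w0 ∈ interior T) : IsClosed (negDualCone A + negDualCone T) := by
  apply IsSeqClosed.isClosed
  intro u p hu hup
  have hmem : ∀ n, ∃ x ∈ negDualCone A, ∃ y ∈ negDualCone T, x + y = u n := fun n => hu n
  choose a ha b hb hab using hmem
  obtain ⟨ε, hε, hball⟩ := Metric.isOpen_iff.mp isOpen_interior w0 hw0T
  have key : ∀ b' ∈ negDualCone T, ⟪b', w0⟫_ℝ ≤ -(ε / 2) * ‖b'‖ := by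
    intro b' hb'
    by_cases hb0 : b' = 0
    · simp [hb0]
    · have hnb : (0:ℝ) < ‖b'‖ := norm_pos_iff.mpr hb0
      set u' := w0 + (ε / 2) • ‖b'‖⁻¹ • b' with hu'
      have hdist : dist u' w0 < ε := by
        rw [hu', dist_eq_norm, add_sub_cancel_left, norm_smul, norm_smul]
        simp only [Real.norm_eq_abs, norm_inv, norm_norm]
        rw [abs_of_pos (by linarith : (0:ℝ) < ε / 2), abs_of_pos hnb,
          inv_mul_cancel₀ (ne_of_gt hnb)]
        simpa using by linarith
      have hu'T : u' ∈ T := interior_subset (hball hdist)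
      have h1 := hb' u' hu'T
      rw [hu', inner_add_right, real_inner_smul_right, real_inner_smul_right,
        real_inner_self_eq_norm_sq] at h1
      have h2 : ‖b'‖⁻¹ * ‖b'‖ ^ 2 = ‖b'‖ := by field_simp
      rw [h2] at h1
      linarith
  have hbnd : ∀ n, ‖b n‖ ≤ (2 / ε) * (-⟪u n, w0⟫_ℝ) := by
    intro n
    have h1 : ⟪u n, w0⟫_ℝ = ⟪a n, w0⟫_ℝ + ⟪b n, w0⟫_ℝ := by
      rw [← hab n, inner_add_left]
    have h2 := ha n w0 hw0A
    have h3 := key (b n) (hb n)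
    have h4 : (ε / 2) * ‖b n‖ ≤ -⟪u n, w0⟫_ℝ := by
      rw [h1]; linarith
    calc ‖b n‖ = (2 / ε) * ((ε / 2) * ‖b n‖) := by field_simp
      _ ≤ (2 / ε) * (-⟪u n, w0⟫_ℝ) := by
          apply mul_le_mul_of_nonneg_left h4 (by positivity)
  have htnd : Tendsto (fun n => (2 / ε) * (-⟪u n, w0⟫_ℝ)) atTop
      (𝓝 ((2 / ε) * (-⟪p, w0⟫_ℝ))) := by
    exact (((hup.inner tendsto_const_nhds)).neg).const_mul _
  obtain ⟨M, hM⟩ := htnd.bddAbove_range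
  have hbM : ∀ n, b n ∈ closedBall (0 : Euc d) M := by
    intro n
    rw [mem_closedBall, dist_zero_right]
    exact le_trans (hbnd n) (hM ⟨n, rfl⟩)
  obtain ⟨q, _, φ, hφ, hbφ⟩ :=
    tendsto_subseq_of_bounded isBounded_closedBall hbM
  have haφ : Tendsto (fun n => u (φ n) - b (φ n)) atTop (𝓝 (p - q)) :=
    (hup.comp hφ.tendsto_atTop).sub hbφ
  have hpq : p - q ∈ negDualCone A := by
    refine (negDual_isClosed A).mem_of_tendsto haφ (Eventually.of_forall fun n => ?_)
    have : u (φ n) - b (φ n) = a (φ n) := by rw [← hab (φ n)]; abel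
    rw [this]; exact ha (φ n)
  have hq : q ∈ negDualCone T :=
    (negDual_isClosed T).mem_of_tendsto hbφ (Eventually.of_forall fun n => hb (φ n))
  exact ⟨p - q, hpq, q, hq, sub_add_cancel p q⟩

lemma negDual_inter_subset_add (A T : Set (Euc d))
    (hA0 : (0 : Euc d) ∈ A) (hAconv : Convex ℝ A)
    (hAcone : ∀ s ∈ A, ∀ t : ℝ, 0 < t → t • s ∈ A) (hAcl : IsClosed A)
    (hT0 : (0 : Euc d) ∈ T) (hTconv : Convex ℝ T)
    (hTcone : ∀ s ∈ T, ∀ t : ℝ, 0 < t → t • s ∈ T) (hTcl : IsClosed T)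
    (hqc : (A ∩ interior T).Nonempty) :
    negDualCone (A ∩ T) ⊆ negDualCone A + negDualCone T := by
  obtain ⟨w0, hw0A, hw0T⟩ := hqc
  set E := negDualCone A + negDualCone T with hE
  have hEcl : IsClosed E := closed_sum_negDual A T w0 hw0A hw0T
  have hE0 : (0 : Euc d) ∈ E :=
    ⟨0, negDual_zero_mem A, 0, negDual_zero_mem T, add_zero 0⟩
  have hEconv : Convex ℝ E := (negDual_convex A).add (negDual_convex T)
  have hEcone : ∀ s ∈ E, ∀ t : ℝ, 0 < t → t • s ∈ E := by
    rintro s ⟨x, hx, y, hy, rfl⟩ t ht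
    exact ⟨t • x, negDual_cone hx ht, t • y, negDual_cone hy ht, (smul_add t x y).symm⟩
  have h1 : negDualCone E = A ∩ T := by
    rw [hE, negDual_add _ _ (negDual_zero_mem A) (negDual_zero_mem T),
      bipolar A hA0 hAconv hAcone hAcl, bipolar T hT0 hTconv hTcone hTcl]
  have h2 : negDualCone (A ∩ T) = E := by
    rw [← h1, bipolar E hE0 hEconv hEcone hEcl]
  exact h2.le

end CorAux

namespace CorAux2

variable {d : ℕ}

lemma mem_contCone_of_eventually {S : Set (Euc d)} {x w : Euc d}
    (h : ∀ᶠ t in 𝓝[>] (0:ℝ), x + t • w ∈ S) : w ∈ contCone S x := by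
  obtain ⟨uu, huu, hsub⟩ := mem_nhdsGT_iff_exists_Ioc_subset.mp h
  rw [mem_Ioi] at huu
  refine ⟨fun _ => w, fun k => uu / (k + 1), tendsto_const_nhds, ?_, ?_, ?_⟩
  · have h1 : Tendsto (fun k : ℕ => uu * (1 / ((k : ℝ) + 1))) atTop (𝓝 (uu * 0)) :=
      tendsto_one_div_add_atTop_nhds_zero_nat.const_mul uu
    simpa [div_eq_mul_inv, mul_comm] using h1
  · intro k; positivity
  · intro k
    apply hsub
    constructor
    · positivity
    · apply div_le_self huu.le
      have : (0:ℝ) ≤ (k:ℝ) := Nat.cast_nonneg k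
      linarith

lemma key_inner_nonneg (ϑ : Euc d → ℝ) (xb v : Euc d)
    (hv : v ∈ upperSubdiff ϑ xb) (E : Set (Euc d))
    (hmin : ∃ U ∈ 𝓝 xb, ∀ x ∈ E ∩ U, ϑ xb ≤ ϑ x)
    (w : Euc d) (hw : w ∈ contCone E xb) : 0 ≤ ⟪v, w⟫_ℝ := by
  by_contra hneg
  push_neg at hneg
  have hw0 : w ≠ 0 := by
    intro h; rw [h, inner_zero_right] at hneg; exact lt_irrefl _ hneg
  have hnw : (0:ℝ) < ‖w‖ := norm_pos_iff.mpr hw0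
  set c : ℝ := -⟪v, w⟫_ℝ / (2 * ‖w‖) with hc
  have hcpos : 0 < c := by
    apply div_pos (by linarith) (by linarith)
  -- from the subdifferential: eventually the quotient is < c
  have hev : ∀ᶠ y in 𝓝[≠] xb,
      (((ϑ y - ϑ xb - ⟪v, y - xb⟫_ℝ) / ‖y - xb‖ : ℝ) : EReal) < (c : EReal) := by
    exact eventually_lt_of_limsup_lt (lt_of_le_of_lt hv (by exact_mod_cast hcpos))
  obtain ⟨U, hU, hUmin⟩ := hmin
  obtain ⟨vs, ts, htv, htt, htpos, hmem⟩ := hw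
  set y : ℕ → Euc d := fun k => xb + ts k • vs k with hy
  have hy0 : Tendsto y atTop (𝓝 xb) := by
    have h1 : Tendsto (fun k => ts k • vs k) atTop (𝓝 ((0:ℝ) • w)) := htt.smul htv
    rw [zero_smul] at h1
    simpa using tendsto_const_nhds.add h1
  have hvne : ∀ᶠ k in atTop, vs k ≠ 0 := htv.eventually_ne hw0
  have hyne : ∀ᶠ k in atTop, y k ≠ xb := by
    filter_upwards [hvne] with k hk
    simp only [hy, ne_eq, add_eq_left]
    exact smul_ne_zero (ne_of_gt (htpos k)) hk
  have hy0' : Tendsto y atTop (𝓝[≠] xb) :=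
    tendsto_nhdsWithin_of_tendsto_nhds_of_eventually_within y hy0 hyne
  have hevk : ∀ᶠ k in atTop, -⟪v, vs k⟫_ℝ < c * ‖vs k‖ := by
    filter_upwards [hy0'.eventually hev, hy0.eventually hU, hvne] with k hk hkU hkv
    have hϑ : ϑ xb ≤ ϑ (y k) := hUmin (y k) ⟨hmem k, hkU⟩
    have hksub : y k - xb = ts k • vs k := by simp [hy]
    have hden : (0:ℝ) < ts k * ‖vs k‖ :=
      mul_pos (htpos k) (norm_pos_iff.mpr hkv)
    rw [EReal.coe_lt_coe_iff] at hk
    rw [hksub, norm_smul, Real.norm_eq_abs, abs_of_pos (htpos k),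
      real_inner_smul_right] at hk
    rw [div_lt_iff₀ hden] at hk
    have h5 : -(ts k * ⟪v, vs k⟫_ℝ) < c * (ts k * ‖vs k‖) := by linarith
    have h6 : ts k * (-⟪v, vs k⟫_ℝ) < ts k * (c * ‖vs k‖) := by ring_nf; ring_nf at h5; linarith
    exact lt_of_mul_lt_mul_left h6 (htpos k).le
  have hlim1 : Tendsto (fun k => -⟪v, vs k⟫_ℝ) atTop (𝓝 (-⟪v, w⟫_ℝ)) :=
    ((tendsto_const_nhds.inner htv)).neg
  have hlim2 : Tendsto (fun k => c * ‖vs k‖) atTop (𝓝 (c * ‖w‖)) :=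
    (htv.norm).const_mul c
  have hfin : -⟪v, w⟫_ℝ ≤ c * ‖w‖ :=
    le_of_tendsto_of_tendsto hlim1 hlim2 (hevk.mono fun k hk => hk.le)
  have : c * ‖w‖ = -⟪v, w⟫_ℝ / 2 := by
    rw [hc]; field_simp
  rw [this] at hfin
  linarith

end CorAux2

/-- **Refined necessary optimality condition** (Corollary 4.5): with `K` polyhedral,
`C`-concave derivatives and a qualification condition, the necessary condition takes the
form `-∂⁺ϑ(xb) ⊆ (⋂_{z∈K} (D_Bf(xb,z))⁻¹(C))° + N(xb,K)`. -/
theorem refined_necessary_optimality_condition {n m : ℕ}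
    (f : Euc n → Euc n → Euc m) (C : Set (Euc m)) (K : Set (Euc n))
    (hCclosed : IsClosed C) (hCconvex : Convex ℝ C)
    (hCzero : (0 : Euc m) ∈ C)
    (hCcone : ∀ c ∈ C, ∀ t : ℝ, 0 < t → t • c ∈ C)
    (hCpointed : ∀ c ∈ C, -c ∈ C → c = 0)
    (hCnontrivial : ∃ c ∈ C, c ≠ 0)
    (hKne : K.Nonempty) (hKclosed : IsClosed K)
    (ϑ : Euc n → ℝ) (xb : Euc n) (hxb : xb ∈ Equi f C K)
    (hcont : ∃ U ∈ 𝓝 xb, ContinuousOn ϑ U)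
    (hmin : ∃ U ∈ 𝓝 xb, ∀ x ∈ Equi f C K ∩ U, ϑ xb ≤ ϑ x)
    (D : Euc n → Euc n → Euc m)
    (hDcont : ∀ z ∈ K, Continuous (D z))
    (hDph : ∀ z ∈ K, ∀ t : ℝ, 0 < t → ∀ v, D z (t • v) = t • D z v)
    (hBdiff : ∀ ε > (0:ℝ), ∃ δ > (0:ℝ), ∀ x ∈ ball xb δ, ∀ z ∈ K,
      ‖f x z - f xb z - D z (x - xb)‖ ≤ ε * ‖x - xb‖)
    (hErr : ∃ κ > (0:ℝ), ∃ δ > (0:ℝ), ∀ x ∈ ball xb δ ∩ K, ∀ r : ℝ,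
      (∀ z ∈ K, infDist (f x z) C ≤ r) → infDist x (Equi f C K) ≤ κ * r)
    (hKpoly : IsPolyhedral K)
    (hconcave : ∀ z ∈ K, ∀ v₁ v₂ : Euc n, D z (v₁ + v₂) - (D z v₁ + D z v₂) ∈ C)
    (hqc : ((⋂ z ∈ K, D z ⁻¹' C) ∩ interior (contCone K xb)).Nonempty) :
    -upperSubdiff ϑ xb ⊆ negDualCone (⋂ z ∈ K, D z ⁻¹' C) + normalCone K xb := by
  classical
  obtain ⟨I, hI⟩ := hKpoly
  have hxbK : xb ∈ K := hxb.1
  have hKmem : ∀ x : Euc n, x ∈ K ↔ ∀ p ∈ I, ⟪p.1, x⟫_ℝ ≤ p.2 := by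
    intro x; rw [hI]; simp [Set.mem_iInter]
  set A : Set (Euc n) := ⋂ z ∈ K, D z ⁻¹' C with hA
  have hAmem : ∀ x : Euc n, x ∈ A ↔ ∀ z ∈ K, D z x ∈ C := by
    intro x; simp [hA, Set.mem_iInter]
  set T : Set (Euc n) := {w | ∀ p ∈ I, ⟪p.1, xb⟫_ℝ = p.2 → ⟪p.1, w⟫_ℝ ≤ 0} with hT
  -- C is closed under addition
  have hCadd : ∀ a ∈ C, ∀ b ∈ C, a + b ∈ C := by
    intro a ha b hb
    have hmid : (1/2 : ℝ) • a + (1/2 : ℝ) • b ∈ C :=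
      hCconvex ha hb (by norm_num) (by norm_num) (by norm_num)
    have h2 := hCcone _ hmid 2 two_pos
    rwa [smul_add, smul_smul, smul_smul, (by norm_num : (2:ℝ) * (1/2) = 1),
      one_smul, one_smul] at h2
  have hD0 : ∀ z ∈ K, D z 0 = 0 := by
    intro z hz
    have h := hDph z hz 2 two_pos 0
    rw [smul_zero, two_smul] at h
    exact left_eq_add.mp h
  -- facts about A
  have hA0 : (0 : Euc n) ∈ A := by
    rw [hAmem]; intro z hz; rw [hD0 z hz]; exact hCzero
  have hAcone : ∀ s ∈ A, ∀ t : ℝ, 0 < t → t • s ∈ A := by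
    intro s hs t ht
    rw [hAmem] at hs ⊢
    intro z hz
    rw [hDph z hz t ht]
    exact hCcone _ (hs z hz) t ht
  have hDsC : ∀ z ∈ K, ∀ v : Euc n, D z v ∈ C → ∀ a : ℝ, 0 ≤ a → D z (a • v) ∈ C := by
    intro z hz v hv a ha
    rcases eq_or_lt_of_le ha with h | h
    · rw [← h, zero_smul, hD0 z hz]; exact hCzero
    · rw [hDph z hz a h]; exact hCcone _ hv a h
  have hAconv : Convex ℝ A := by
    intro x hx y hy a b ha hb hab
    rw [hAmem] at hx hy ⊢
    intro z hz
    have hc := hconcave z hz (a • x) (b • y)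
    have h1 : D z (a • x) ∈ C := hDsC z hz x (hx z hz) a ha
    have h2 : D z (b • y) ∈ C := hDsC z hz y (hy z hz) b hb
    have h3 := hCadd _ (hCadd _ h1 _ h2) _ hc
    have heq : D z (a • x) + D z (b • y) +
        (D z (a • x + b • y) - (D z (a • x) + D z (b • y))) = D z (a • x + b • y) := by abel
    rwa [heq] at h3
  have hAcl : IsClosed A :=
    isClosed_biInter fun z hz => hCclosed.preimage (hDcont z hz)
  -- facts about T
  have hT0 : (0 : Euc n) ∈ T := by
    simp only [hT, Set.mem_setOf_eq]
    intro p hp hact; simp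
  have hTconv : Convex ℝ T := by
    intro x hx y hy a b ha hb hab
    simp only [hT, Set.mem_setOf_eq] at hx hy ⊢
    intro p hp hact
    rw [inner_add_right, real_inner_smul_right, real_inner_smul_right]
    nlinarith [mul_nonneg ha (neg_nonneg.mpr (hx p hp hact)),
      mul_nonneg hb (neg_nonneg.mpr (hy p hp hact))]
  have hTcone : ∀ s ∈ T, ∀ t : ℝ, 0 < t → t • s ∈ T := by
    intro s hs t ht
    simp only [hT, Set.mem_setOf_eq] at hs ⊢
    intro p hp hact
    rw [real_inner_smul_right]
    exact mul_nonpos_of_nonneg_of_nonpos ht.le (hs p hp hact)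
  have hTcl : IsClosed T := by
    have hTi : T = ⋂ p ∈ I, {w : Euc n | ⟪p.1, xb⟫_ℝ = p.2 → ⟪p.1, w⟫_ℝ ≤ 0} := by
      ext w; simp [hT]
    rw [hTi]
    refine isClosed_biInter fun p hp => ?_
    by_cases hact : ⟪p.1, xb⟫_ℝ = p.2
    · have he : {w : Euc n | ⟪p.1, xb⟫_ℝ = p.2 → ⟪p.1, w⟫_ℝ ≤ 0}
          = {w : Euc n | ⟪p.1, w⟫_ℝ ≤ 0} := by ext w; simp [hact]
      rw [he]
      exact isClosed_le (Continuous.inner continuous_const continuous_id) continuous_const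
    · have he : {w : Euc n | ⟪p.1, xb⟫_ℝ = p.2 → ⟪p.1, w⟫_ℝ ≤ 0} = univ := by
        ext w
        simp only [Set.mem_setOf_eq, Set.mem_univ, iff_true]
        intro h; exact absurd h hact
      rw [he]; exact isClosed_univ
  -- radial feasibility
  have hTrad : ∀ w ∈ T, ∀ᶠ t in 𝓝[>] (0:ℝ), xb + t • w ∈ K := by
    intro w hw
    simp only [hT, Set.mem_setOf_eq] at hw
    have hall : ∀ p ∈ I, ∀ᶠ t in 𝓝[>] (0:ℝ), ⟪p.1, xb + t • w⟫_ℝ ≤ p.2 := by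
      intro p hp
      by_cases hact : ⟪p.1, xb⟫_ℝ = p.2
      · filter_upwards [self_mem_nhdsWithin] with t ht
        rw [inner_add_right, real_inner_smul_right, hact]
        have := mul_nonpos_of_nonneg_of_nonpos (le_of_lt ht) (hw p hp hact)
        linarith
      · have hlt : ⟪p.1, xb⟫_ℝ < p.2 := lt_of_le_of_ne ((hKmem xb).mp hxbK p hp) hact
        have hcont2 : Tendsto (fun t : ℝ => ⟪p.1, xb + t • w⟫_ℝ) (𝓝[>] (0:ℝ))
            (𝓝 ⟪p.1, xb + (0:ℝ) • w⟫_ℝ) := by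
          apply Tendsto.mono_left _ nhdsWithin_le_nhds
          exact Continuous.tendsto (Continuous.inner continuous_const
            (continuous_const.add (continuous_id.smul continuous_const))) 0
        rw [zero_smul, add_zero] at hcont2
        exact (hcont2.eventually_lt_const hlt).mono fun t ht => ht.le
    have := (Filter.eventually_all_finset I).mpr hall
    exact this.mono fun t ht => (hKmem _).mpr ht
  -- contingent cone of K equals T
  have hTC : contCone K xb = T := by
    apply Subset.antisymm
    · rintro w ⟨vs, ts, htv, htt, htpos, hmem⟩
      simp only [hT, Set.mem_setOf_eq]
      intro p hp hact
      have hk : ∀ k, ⟪p.1, vs k⟫_ℝ ≤ 0 := by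
        intro k
        have h1 := (hKmem _).mp (hmem k) p hp
        rw [inner_add_right, real_inner_smul_right, hact] at h1
        by_contra hcon
        push_neg at hcon
        nlinarith [mul_pos (htpos k) hcon]
      have hlim : Tendsto (fun k => ⟪p.1, vs k⟫_ℝ) atTop (𝓝 ⟪p.1, w⟫_ℝ) :=
        tendsto_const_nhds.inner htv
      exact le_of_tendsto hlim (Eventually.of_forall hk)
    · intro w hw
      exact CorAux2.mem_contCone_of_eventually (hTrad w hw)
  -- Step 3: A ∩ T ⊆ contingent cone of Equi
  have hsub3 : A ∩ T ⊆ contCone (Equi f C K) xb := by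
    rintro w ⟨hwA, hwT⟩
    rw [hAmem] at hwA
    obtain ⟨κ, hκ, δ₂, hδ₂, herr⟩ := hErr
    have hch : ∀ k : ℕ, ∃ t : ℝ, ∃ y : Euc n, 0 < t ∧ t < ((k:ℝ)+1)⁻¹ ∧
        y ∈ Equi f C K ∧ ‖y - (xb + t • w)‖ < t * ((κ * ‖w‖ + 1) * ((k:ℝ)+1)⁻¹) := by
      intro k
      have hεk : (0:ℝ) < ((k:ℝ)+1)⁻¹ := by positivity
      obtain ⟨δ₁, hδ₁, hB⟩ := hBdiff ((k:ℝ)+1)⁻¹ hεk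
      have hevent : ∀ᶠ t in 𝓝[>] (0:ℝ), (0 < t ∧ t < ((k:ℝ)+1)⁻¹) ∧
          t * ‖w‖ < δ₁ ∧ t * ‖w‖ < δ₂ ∧ xb + t • w ∈ K := by
        have e1 : ∀ᶠ t in 𝓝[>] (0:ℝ), 0 < t := self_mem_nhdsWithin
        have hid : Tendsto (fun t : ℝ => t) (𝓝[>] (0:ℝ)) (𝓝 0) :=
          tendsto_id.mono_left nhdsWithin_le_nhds
        have e2 : ∀ᶠ t in 𝓝[>] (0:ℝ), t < ((k:ℝ)+1)⁻¹ := hid.eventually_lt_const hεk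
        have hnrm : Tendsto (fun t : ℝ => t * ‖w‖) (𝓝[>] (0:ℝ)) (𝓝 0) := by
          have := hid.mul_const ‖w‖; rwa [zero_mul] at this
        have e3 := hnrm.eventually_lt_const hδ₁
        have e4 := hnrm.eventually_lt_const hδ₂
        filter_upwards [e1, e2, e3, e4, hTrad w hwT] with t h1 h2 h3 h4 h5
        exact ⟨⟨h1, h2⟩, h3, h4, h5⟩
      obtain ⟨t, ⟨ht0, htk⟩, h3, h4, h5⟩ := hevent.exists
      set x := xb + t • w with hx
      have hxnorm : ‖x - xb‖ = t * ‖w‖ := by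
        rw [hx, add_sub_cancel_left, norm_smul, Real.norm_eq_abs, abs_of_pos ht0]
      have hxball1 : x ∈ ball xb δ₁ := by rw [mem_ball, dist_eq_norm, hxnorm]; exact h3
      have hxball2 : x ∈ ball xb δ₂ := by rw [mem_ball, dist_eq_norm, hxnorm]; exact h4
      have hr : ∀ z ∈ K, infDist (f x z) C ≤ ((k:ℝ)+1)⁻¹ * (t * ‖w‖) := by
        intro z hz
        have hc1 : f xb z ∈ C := hxb.2 z hz
        have hc2 : t • D z w ∈ C := hCcone _ (hwA z hz) t ht0
        have hmem2 : f xb z + t • D z w ∈ C := hCadd _ hc1 _ hc2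
        have hid : infDist (f x z) C ≤ dist (f x z) (f xb z + t • D z w) :=
          infDist_le_dist_of_mem hmem2
        have hBz := hB x hxball1 z hz
        rw [hxnorm] at hBz
        have heq : dist (f x z) (f xb z + t • D z w)
            = ‖f x z - f xb z - D z (x - xb)‖ := by
          rw [dist_eq_norm, hx, add_sub_cancel_left, hDph z hz t ht0]
          congr 1; abel
        calc infDist (f x z) C ≤ dist (f x z) (f xb z + t • D z w) := hid
          _ = ‖f x z - f xb z - D z (x - xb)‖ := heq
          _ ≤ ((k:ℝ)+1)⁻¹ * (t * ‖w‖) := hBz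
      have hinf := herr x ⟨hxball2, h5⟩ (((k:ℝ)+1)⁻¹ * (t * ‖w‖)) hr
      have hlt : κ * (((k:ℝ)+1)⁻¹ * (t * ‖w‖)) < t * ((κ * ‖w‖ + 1) * ((k:ℝ)+1)⁻¹) := by
        have h6 : (0:ℝ) < t * ((k:ℝ)+1)⁻¹ := by positivity
        nlinarith
      have hne : (Equi f C K).Nonempty := ⟨xb, hxb⟩
      obtain ⟨y, hy, hdy⟩ := (infDist_lt_iff hne).mp (lt_of_le_of_lt hinf hlt)
      refine ⟨t, y, ht0, htk, hy, ?_⟩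
      have hdn : ‖y - (xb + t • w)‖ = dist x y := by
        rw [dist_eq_norm, ← hx, norm_sub_rev]
      rw [hdn]; exact hdy
    choose ts ys h1 h2 h3 h4 using hch
    refine ⟨fun k => (ts k)⁻¹ • (ys k - xb), ts, ?_, ?_, h1, ?_⟩
    · rw [tendsto_iff_norm_sub_tendsto_zero]
      have hbound : ∀ k : ℕ, ‖(ts k)⁻¹ • (ys k - xb) - w‖
          ≤ (κ * ‖w‖ + 1) * ((k:ℝ)+1)⁻¹ := by
        intro k
        have hts := h1 k
        have heq : (ts k)⁻¹ • (ys k - xb) - w = (ts k)⁻¹ • (ys k - (xb + ts k • w)) := by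
          have hne0 : ts k ≠ 0 := ne_of_gt hts
          match_scalars <;> field_simp
        rw [heq, norm_smul, Real.norm_eq_abs, abs_of_pos (inv_pos.mpr hts)]
        calc (ts k)⁻¹ * ‖ys k - (xb + ts k • w)‖
            ≤ (ts k)⁻¹ * (ts k * ((κ * ‖w‖ + 1) * ((k:ℝ)+1)⁻¹)) :=
              mul_le_mul_of_nonneg_left (h4 k).le (inv_pos.mpr hts).le
          _ = (κ * ‖w‖ + 1) * ((k:ℝ)+1)⁻¹ := by field_simp
      have hz : Tendsto (fun k : ℕ => (κ * ‖w‖ + 1) * ((k:ℝ)+1)⁻¹) atTop (𝓝 0) := by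
        have := tendsto_one_div_add_atTop_nhds_zero_nat.const_mul (κ * ‖w‖ + 1)
        simpa [one_div, mul_zero] using this
      exact squeeze_zero (fun k => norm_nonneg _) hbound hz
    · apply squeeze_zero (fun k => (h1 k).le) (fun k => (h2 k).le)
      simpa [one_div] using (tendsto_one_div_add_atTop_nhds_zero_nat :
        Tendsto (fun n : ℕ => 1 / ((n : ℝ) + 1)) atTop (𝓝 0))
    · intro k
      have hek : xb + ts k • ((ts k)⁻¹ • (ys k - xb)) = ys k := by
        rw [smul_inv_smul₀ (ne_of_gt (h1 k))]; abel
      rw [hek]; exact h3 k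
  -- normal cone
  have hTN : negDualCone T ⊆ normalCone K xb := by
    intro u hu y hy
    have hyT : y - xb ∈ T := by
      simp only [hT, Set.mem_setOf_eq]
      intro p hp hact
      have hle := (hKmem y).mp hy p hp
      rw [inner_sub_right, hact]
      linarith
    exact hu _ hyT
  -- conclusion
  have hqc' : (A ∩ interior T).Nonempty := by rw [← hTC]; exact hqc
  intro u hu
  have hv : -u ∈ upperSubdiff ϑ xb := Set.mem_neg.mp hu
  have hu' : u ∈ negDualCone (A ∩ T) := by
    intro s hs
    have h0 := CorAux2.key_inner_nonneg ϑ xb (-u) hv (Equi f C K) hmin s (hsub3 hs)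
    rw [inner_neg_left] at h0
    linarith
  obtain ⟨x, hx, y, hy, rfl⟩ := CorAux.negDual_inter_subset_add A T hA0 hAconv hAcone
    hAcl hT0 hTconv hTcone hTcl hqc' hu'
  exact Set.add_mem_add hx (hTN hy)
end
end

section
/- Let ϑ : ℝ^n → ℝ be locally Lipschitz around x̄ ∈ E, where E ⊆ ℝ^n. If the Dini lower directional derivative satisfies ϑ^{D−}(x̄;w) = liminf_{t↓0} (ϑ(x̄+tw) − ϑ(x̄))/t > 0 for every w ∈ T(x̄,E)\{0}, then x̄ is a strict local minimizer of ϑ on E, i.e. there is a neighborhood U of x̄ with ϑ(x̄) < ϑ(x) for all x ∈ (E ∩ U)\{x̄}. -/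
open Filter Metric Set Pointwise
open scoped InnerProductSpace Topology

noncomputable section

/-- **Primal sufficient optimality condition** (Lemma 4.6): if `ϑ` is locally Lipschitz
around `xb ∈ A` and its Dini lower derivative is positive on `T(xb,A) \ {0}`, then `xb` is
a strict local minimizer of `ϑ` on `A`. -/
theorem primal_sufficient_condition {n : ℕ}
    (ϑ : Euc n → ℝ) (A : Set (Euc n)) (xb : Euc n) (hxb : xb ∈ A)
    (hlip : ∃ L : NNReal, ∃ U ∈ 𝓝 xb, LipschitzOnWith L ϑ U)
    (hpos : ∀ w ∈ contCone A xb, w ≠ 0 → 0 < diniLower ϑ xb w) :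
    ∃ U ∈ 𝓝 xb, ∀ x ∈ A ∩ U, x ≠ xb → ϑ xb < ϑ x := by
  by_contra hc
  push_neg at hc
  -- extract a sequence
  have H : ∀ k : ℕ, ∃ x, x ∈ A ∧ dist x xb < 1/(k+1) ∧ x ≠ xb ∧ ϑ x ≤ ϑ xb := by
    intro k
    have hb : ball xb (1/(k+1)) ∈ 𝓝 xb := ball_mem_nhds _ (by positivity)
    obtain ⟨x, ⟨hxA, hxb'⟩, hne, hle⟩ := hc _ hb
    exact ⟨x, hxA, by simpa [mem_ball] using hxb', hne, hle⟩
  choose x hxA hxd hxne hxle using H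
  set t : ℕ → ℝ := fun k => ‖x k - xb‖ with ht
  have ht0 : ∀ k, 0 < t k := fun k => norm_pos_iff.2 (sub_ne_zero.2 (hxne k))
  have httend : Tendsto t atTop (𝓝 0) := by
    have h1 : Tendsto (fun k : ℕ => 1/((k:ℝ)+1)) atTop (𝓝 0) :=
      tendsto_one_div_add_atTop_nhds_zero_nat
    refine squeeze_zero (fun k => (ht0 k).le) (fun k => ?_) h1
    simpa [ht, dist_eq_norm] using (hxd k).le
  set v : ℕ → Euc n := fun k => (t k)⁻¹ • (x k - xb) with hv
  have hv1 : ∀ k, v k ∈ sphere (0 : Euc n) 1 := by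
    intro k
    simp only [mem_sphere_iff_norm, sub_zero, hv, norm_smul, norm_inv, norm_norm]
    rw [Real.norm_eq_abs, abs_of_pos (ht0 k)]; exact inv_mul_cancel₀ (ht0 k).ne'
  obtain ⟨w, hw, φ, hφ, hconv⟩ := (isCompact_sphere (0 : Euc n) 1).tendsto_subseq hv1
  have hwnorm : ‖w‖ = 1 := by simpa using hw
  have hwne : w ≠ 0 := by intro h; simp [h] at hwnorm
  have hxeq : ∀ k, xb + t k • v k = x k := by
    intro k
    simp [hv, smul_smul, mul_inv_cancel₀ (ht0 k).ne']
  have htφ : Tendsto (t ∘ φ) atTop (𝓝 0) := httend.comp hφ.tendsto_atTop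
  have hwT : w ∈ contCone A xb := by
    refine ⟨v ∘ φ, t ∘ φ, hconv, htφ, fun k => ht0 _, fun k => ?_⟩
    show xb + t (φ k) • v (φ k) ∈ A
    rw [hxeq]; exact hxA _
  have hd := hpos w hwT hwne
  -- map filter inequality
  have hmap : Tendsto (t ∘ φ) atTop (𝓝[>] (0:ℝ)) := by
    refine tendsto_nhdsWithin_iff.2 ⟨htφ, Eventually.of_forall fun k => ht0 _⟩
  -- Lipschitz estimate
  obtain ⟨L, U, hU, hL⟩ := hlip
  obtain ⟨δ, hδ, hball⟩ := Metric.mem_nhds_iff.1 hU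
  have hevδ : ∀ᶠ k in atTop, t (φ k) < δ := htφ.eventually (gt_mem_nhds hδ)
  set g : ℝ → EReal := fun s => (((ϑ (xb + s • w) - ϑ xb) / s : ℝ) : EReal) with hg
  have hkey : ∀ᶠ k in atTop, g (t (φ k)) ≤ ((L * ‖w - v (φ k)‖ : ℝ) : EReal) := by
    filter_upwards [hevδ] with k hk
    set s := t (φ k) with hs
    have hs0 : 0 < s := ht0 _
    have h1 : xb + s • w ∈ U := by
      apply hball
      simp only [mem_ball, dist_eq_norm, add_sub_cancel_left, norm_smul,
        Real.norm_eq_abs, abs_of_pos hs0, hwnorm, mul_one]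
      exact hk
    have h2 : x (φ k) ∈ U := by
      apply hball
      simpa [mem_ball, dist_eq_norm, ht] using hk
    have hlipest : ϑ (xb + s • w) - ϑ (x (φ k)) ≤ L * (s * ‖w - v (φ k)‖) := by
      have := (hL.dist_le_mul _ h1 _ h2)
      have hdist : dist (xb + s • w) (x (φ k)) = s * ‖w - v (φ k)‖ := by
        rw [← hxeq (φ k)]
        simp only [dist_eq_norm, add_sub_add_left_eq_sub, ← smul_sub, norm_smul,
          Real.norm_eq_abs, abs_of_pos hs0]
        rw [← hs, ← smul_sub, norm_smul, Real.norm_eq_abs, abs_of_pos hs0]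
      calc ϑ (xb + s • w) - ϑ (x (φ k)) ≤ |ϑ (xb + s • w) - ϑ (x (φ k))| := le_abs_self _
        _ = dist (ϑ (xb + s • w)) (ϑ (x (φ k))) := (Real.dist_eq _ _).symm
        _ ≤ L * dist (xb + s • w) (x (φ k)) := this
        _ = L * (s * ‖w - v (φ k)‖) := by rw [hdist]
    have hreal : (ϑ (xb + s • w) - ϑ xb) / s ≤ L * ‖w - v (φ k)‖ := by
      rw [div_le_iff₀ hs0]
      calc ϑ (xb + s • w) - ϑ xb ≤ ϑ (xb + s • w) - ϑ (x (φ k)) := by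
            linarith [hxle (φ k)]
        _ ≤ L * (s * ‖w - v (φ k)‖) := hlipest
        _ = L * ‖w - v (φ k)‖ * s := by ring
    simp only [hg]
    exact EReal.coe_le_coe_iff.2 hreal
  -- liminf chain
  have hbound : Tendsto (fun k => ((L * ‖w - v (φ k)‖ : ℝ) : EReal)) atTop (𝓝 (0 : EReal)) := by
    have : Tendsto (fun k => (L : ℝ) * ‖w - v (φ k)‖) atTop (𝓝 0) := by
      have h1 : Tendsto (fun k => w - (v ∘ φ) k) atTop (𝓝 (w - w)) :=
        tendsto_const_nhds.sub hconv
      rw [sub_self] at h1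
      have h2 : Tendsto (fun k => ‖w - v (φ k)‖) atTop (𝓝 0) := by
        simpa [Function.comp] using h1.norm
      simpa using h2.const_mul (L : ℝ)
    have h3 := EReal.tendsto_coe.2 this
    simpa using h3
  have hle1 : diniLower ϑ xb w ≤ liminf (g ∘ (t ∘ φ)) atTop := by
    rw [Filter.liminf_comp]
    exact liminf_le_liminf_of_le (u := g) hmap
  have hle2 : liminf (g ∘ (t ∘ φ)) atTop ≤ 0 := by
    calc liminf (g ∘ (t ∘ φ)) atTop
        ≤ liminf (fun k => ((L * ‖w - v (φ k)‖ : ℝ) : EReal)) atTop :=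
          liminf_le_liminf hkey
      _ = 0 := hbound.liminf_eq
  exact absurd (lt_of_lt_of_le hd (hle1.trans hle2)) (lt_irrefl _)
end
end

section
/- Let f : ℝ^n × ℝ^n → ℝ^m be a bifunction, C ⊆ ℝ^m a nontrivial closed convex pointed cone, K ⊆ ℝ^n nonempty and closed, and let ϑ : ℝ^n → ℝ be locally Lipschitz around x̄ ∈ Equi. Suppose (i) f is strictly B-differentiable at x̄ uniformly on K with family {D_Bf(x̄,z) : z ∈ K}, and (ii) this family is equicontinuous at each point of ℝ^n. If 0 ∈ ∂̂ϑ(x̄) + int[(⋂_{z∈K} (D_Bf(x̄,z))⁻¹(T(f(x̄,z),C)) ∩ T(x̄,K))°], then x̄ is a strict local minimizer of ϑ over Equi. -/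
open Filter Metric Set Pointwise
open scoped InnerProductSpace Topology

noncomputable section

/-- **Sufficient optimality condition** (Theorem 4.7): under strict uniform
B-differentiability and equicontinuity, if
`0 ∈ ∂̂ϑ(xb) + int[(⋂_{z∈K} (D_Bf(xb,z))⁻¹(T(f(xb,z),C)) ∩ T(xb,K))°]`,
then `xb` is a strict local minimizer of `ϑ` over `Equi`. -/
theorem sufficient_optimality_condition {n m : ℕ}
    (f : Euc n → Euc n → Euc m) (C : Set (Euc m)) (K : Set (Euc n))
    (hCclosed : IsClosed C) (hCconvex : Convex ℝ C)
    (hCzero : (0 : Euc m) ∈ C)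
    (hCcone : ∀ c ∈ C, ∀ t : ℝ, 0 < t → t • c ∈ C)
    (hCpointed : ∀ c ∈ C, -c ∈ C → c = 0)
    (hCnontrivial : ∃ c ∈ C, c ≠ 0)
    (hKne : K.Nonempty) (hKclosed : IsClosed K)
    (ϑ : Euc n → ℝ) (xb : Euc n) (hxb : xb ∈ Equi f C K)
    (hlip : ∃ L : NNReal, ∃ U ∈ 𝓝 xb, LipschitzOnWith L ϑ U)
    (D : Euc n → Euc n → Euc m)
    (hDcont : ∀ z ∈ K, Continuous (D z))
    (hDph : ∀ z ∈ K, ∀ t : ℝ, 0 < t → ∀ v, D z (t • v) = t • D z v)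
    (hStrict : ∀ ε > (0:ℝ), ∃ δ > (0:ℝ), ∀ x₁ ∈ ball xb δ, ∀ x₂ ∈ ball xb δ, ∀ z ∈ K,
      ‖f x₁ z - f x₂ z - D z (x₁ - x₂)‖ ≤ ε * ‖x₁ - x₂‖)
    (hEqui : Equicontinuous (fun z : {z // z ∈ K} => D z.1))
    (hcond : (0 : Euc n) ∈ regularSubdiff ϑ xb +
      interior (negDualCone
        ((⋂ z ∈ K, D z ⁻¹' (contCone C (f xb z))) ∩ contCone K xb))) :
    ∃ U ∈ 𝓝 xb, ∀ x ∈ Equi f C K ∩ U, x ≠ xb → ϑ xb < ϑ x := by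
  classical
  set S : Set (Euc n) :=
    ((⋂ z ∈ K, D z ⁻¹' (contCone C (f xb z))) ∩ contCone K xb) with hSdef
  obtain ⟨v, hv, w, hw, hvw⟩ := Set.mem_add.mp hcond
  obtain ⟨ρ, hρ, hballw⟩ := Metric.mem_nhds_iff.mp (mem_interior_iff_mem_nhds.mp hw)
  have hvw' : v = -w := by linear_combination (norm := abel_nf) hvw
  -- key coercivity estimate on the dual cone interior
  have hkey : ∀ s ∈ S, ρ / 2 * ‖s‖ ≤ ⟪v, s⟫_ℝ := by
    intro s hs
    rcases eq_or_ne s 0 with rfl | hs0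
    · simp
    · have hu : w + (ρ / 2) • (‖s‖⁻¹ • s) ∈ negDualCone S := by
        apply hballw
        rw [Metric.mem_ball, dist_eq_norm, add_sub_cancel_left, norm_smul, norm_smul,
          norm_inv, norm_norm, Real.norm_eq_abs, abs_of_pos (by linarith : (0:ℝ) < ρ / 2),
          inv_mul_cancel₀ (norm_ne_zero_iff.mpr hs0), mul_one]
        linarith
      have h1 := hu s hs
      rw [inner_add_left, real_inner_smul_left, real_inner_smul_left,
        real_inner_self_eq_norm_mul_norm] at h1
      rw [hvw', inner_neg_left]
      have hns : (0:ℝ) < ‖s‖ := norm_pos_iff.mpr hs0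
      have : ‖s‖⁻¹ * (‖s‖ * ‖s‖) = ‖s‖ := by field_simp
      rw [this] at h1
      linarith
  by_contra hcon
  push_neg at hcon
  have hseq : ∀ k : ℕ, ∃ y, (y ∈ Equi f C K ∧ y ∈ ball xb (1 / ((k : ℝ) + 1))) ∧
      y ≠ xb ∧ ϑ y ≤ ϑ xb := by
    intro k
    obtain ⟨y, hy, h1, h2⟩ := hcon (ball xb (1 / ((k : ℝ) + 1)))
      (ball_mem_nhds _ (by positivity))
    exact ⟨y, ⟨hy.1, hy.2⟩, h1, h2⟩
  choose y hy hne hle using hseq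
  have hyE : ∀ k, y k ∈ Equi f C K := fun k => (hy k).1
  set t : ℕ → ℝ := fun k => ‖y k - xb‖ with htdef
  have ht0 : ∀ k, 0 < t k := fun k => norm_pos_iff.mpr (sub_ne_zero.mpr (hne k))
  have htlt : ∀ k, t k < 1 / ((k : ℝ) + 1) := by
    intro k
    have := (hy k).2
    rwa [Metric.mem_ball, dist_eq_norm] at this
  have htend : Tendsto t atTop (𝓝 0) := by
    refine squeeze_zero (fun k => (ht0 k).le) (fun k => (htlt k).le) ?_
    exact tendsto_one_div_add_atTop_nhds_zero_nat
  set d : ℕ → Euc n := fun k => (t k)⁻¹ • (y k - xb) with hddef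
  have hdnorm : ∀ k, ‖d k‖ = 1 := by
    intro k
    rw [hddef]
    rw [norm_smul, norm_inv, Real.norm_eq_abs, abs_of_pos (ht0 k)]
    exact inv_mul_cancel₀ (ht0 k).ne'
  have hyeq : ∀ k, y k - xb = t k • d k := by
    intro k
    rw [hddef]
    exact (smul_inv_smul₀ (ht0 k).ne' _).symm
  obtain ⟨dd, hddmem, φ, hφ, hconv⟩ :=
    (isCompact_sphere (0 : Euc n) 1).tendsto_subseq
      (fun k => mem_sphere_zero_iff_norm.mpr (hdnorm k))
  have hdd1 : ‖dd‖ = 1 := mem_sphere_zero_iff_norm.mp hddmem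
  have htφ : Tendsto (fun k => t (φ k)) atTop (𝓝 0) := htend.comp hφ.tendsto_atTop
  have htφ0 : ∀ k, 0 < t (φ k) := fun k => ht0 (φ k)
  have hyφ : Tendsto (fun k => y (φ k)) atTop (𝓝 xb) := by
    rw [tendsto_iff_dist_tendsto_zero]
    simpa only [dist_eq_norm] using htφ
  have hmemeq : ∀ k, xb + t (φ k) • d (φ k) = y (φ k) := by
    intro k
    rw [← hyeq (φ k)]
    abel
  -- dd belongs to S
  have hddS : dd ∈ S := by
    rw [hSdef]
    constructor
    · simp only [Set.mem_iInter, Set.mem_preimage]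
      intro z hz
      refine ⟨fun k => (t (φ k))⁻¹ • (f (y (φ k)) z - f xb z), fun k => t (φ k),
        ?_, htφ, htφ0, ?_⟩
      · -- convergence of difference quotients to D z dd
        have hDd : Tendsto (fun k => D z (d (φ k))) atTop (𝓝 (D z dd)) :=
          ((hDcont z hz).tendsto dd).comp hconv
        have hrem : Tendsto
            (fun k => (t (φ k))⁻¹ • (f (y (φ k)) z - f xb z) - D z (d (φ k)))
            atTop (𝓝 0) := by
          rw [NormedAddCommGroup.tendsto_nhds_zero]
          intro ε hε
          obtain ⟨δ, hδ, hδs⟩ := hStrict (ε / 2) (by linarith)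
          have hball : ∀ᶠ k in atTop, y (φ k) ∈ ball xb δ := by
            have := hyφ.eventually (Metric.ball_mem_nhds xb hδ)
            exact this
          filter_upwards [hball] with k hk
          have h2 := hδs (y (φ k)) hk xb (Metric.mem_ball_self hδ) z hz
          have heqD : D z (d (φ k)) = (t (φ k))⁻¹ • D z (y (φ k) - xb) := by
            rw [hyeq (φ k), hDph z hz _ (htφ0 k), inv_smul_smul₀ (htφ0 k).ne']
          rw [heqD, ← smul_sub, norm_smul, norm_inv, Real.norm_eq_abs,
            abs_of_pos (htφ0 k)]
          have hnorm : ‖y (φ k) - xb‖ = t (φ k) := rfl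
          calc (t (φ k))⁻¹ * ‖f (y (φ k)) z - f xb z - D z (y (φ k) - xb)‖
              ≤ (t (φ k))⁻¹ * (ε / 2 * t (φ k)) := by
                apply mul_le_mul_of_nonneg_left _ (inv_nonneg.mpr (htφ0 k).le)
                rw [← hnorm]; exact h2
            _ = ε / 2 := by
                rw [mul_comm (ε / 2), ← mul_assoc, inv_mul_cancel₀ (htφ0 k).ne', one_mul]
            _ < ε := by linarith
        have := hrem.add hDd
        simp only [zero_add] at this
        convert this using 2 with k
        abel
      · intro k
        have : f xb z + t (φ k) • ((t (φ k))⁻¹ • (f (y (φ k)) z - f xb z))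
            = f (y (φ k)) z := by
          rw [smul_inv_smul₀ (htφ0 k).ne']
          abel
        rw [this]
        exact (hyE (φ k)).2 z hz
    · exact ⟨fun k => d (φ k), fun k => t (φ k), hconv, htφ, htφ0,
        fun k => by rw [hmemeq k]; exact (hyE (φ k)).1⟩
  have hvd : ρ / 2 ≤ ⟪v, dd⟫_ℝ := by
    have := hkey dd hddS
    rwa [hdd1, mul_one] at this
  -- exploit the regular subdifferential inequality along the sequence
  have hlt0 : ((-(ρ / 4) : ℝ) : EReal) <
      Filter.liminf
        (fun y' => (((ϑ y' - ϑ xb - ⟪v, y' - xb⟫_ℝ) / ‖y' - xb‖ : ℝ) : EReal))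
        (𝓝[≠] xb) := by
    refine lt_of_lt_of_le ?_ hv
    exact_mod_cast (by linarith : (-(ρ / 4) : ℝ) < 0)
  have hEv := Filter.eventually_lt_of_lt_liminf hlt0
  have hyφ' : Tendsto (fun k => y (φ k)) atTop (𝓝[≠] xb) := by
    rw [tendsto_nhdsWithin_iff]
    exact ⟨hyφ, Filter.Eventually.of_forall fun k => hne (φ k)⟩
  have hEv2 : ∀ᶠ k in atTop, (-(ρ / 4) : ℝ) <
      (ϑ (y (φ k)) - ϑ xb - ⟪v, y (φ k) - xb⟫_ℝ) / ‖y (φ k) - xb‖ := by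
    filter_upwards [hyφ'.eventually hEv] with k hk
    exact_mod_cast hk
  have hinner : Tendsto (fun k => ⟪v, d (φ k)⟫_ℝ) atTop (𝓝 ⟪v, dd⟫_ℝ) :=
    Filter.Tendsto.inner tendsto_const_nhds hconv
  have hEv3 : ∀ᶠ k in atTop, ρ / 4 < ⟪v, d (φ k)⟫_ℝ :=
    hinner.eventually (eventually_gt_nhds (by linarith))
  obtain ⟨k, hk2, hk3⟩ := (hEv2.and hEv3).exists
  have hq : (ϑ (y (φ k)) - ϑ xb - ⟪v, y (φ k) - xb⟫_ℝ) / ‖y (φ k) - xb‖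
      ≤ -⟪v, d (φ k)⟫_ℝ := by
    have h1 : ϑ (y (φ k)) - ϑ xb ≤ 0 := by linarith [hle (φ k)]
    have h2 : ⟪v, y (φ k) - xb⟫_ℝ = t (φ k) * ⟪v, d (φ k)⟫_ℝ := by
      rw [hyeq (φ k), real_inner_smul_right]
    have hnorm : ‖y (φ k) - xb‖ = t (φ k) := rfl
    rw [hnorm, div_le_iff₀ (htφ0 k), h2]
    nlinarith [htφ0 k]
  linarith
end
end

section
/- Let f : ℝ^n × ℝ^n → ℝ^m be a bifunction, C ⊆ ℝ^m a nontrivial closed convex pointed cone, K ⊆ ℝ^n nonempty, closed and convex, and let x̄ ∈ Equi and z₀ ∈ K with f(x̄,z₀) = 0. If f is strictly B-differentiable at x̄ uniformly on K with a family {D_Bf(x̄,z) : z ∈ K} that is equicontinuous at each point of ℝ^n, then T(x̄,Equi) ⊆ (D_Bf(x̄,z₀))⁻¹(C) ∩ T(x̄,K). -/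
open Filter Metric Set Pointwise
open scoped InnerProductSpace Topology

noncomputable section

/-- **Outer approximation at a zero of `f(xb,·)`** (Remark 3.5(ii)): if `f(xb,z₀) = 0` for
some `z₀ ∈ K`, then `T(xb,Equi) ⊆ (D_Bf(xb,z₀))⁻¹(C) ∩ T(xb,K)`. -/
theorem outer_approximation_at_zero {n m : ℕ}
    (f : Euc n → Euc n → Euc m) (C : Set (Euc m)) (K : Set (Euc n))
    (hCclosed : IsClosed C) (hCconvex : Convex ℝ C)
    (hCzero : (0 : Euc m) ∈ C)
    (hCcone : ∀ c ∈ C, ∀ t : ℝ, 0 < t → t • c ∈ C)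
    (hCpointed : ∀ c ∈ C, -c ∈ C → c = 0)
    (hCnontrivial : ∃ c ∈ C, c ≠ 0)
    (hKne : K.Nonempty) (hKclosed : IsClosed K) (hKconv : Convex ℝ K)
    (xb : Euc n) (hxb : xb ∈ Equi f C K)
    (z₀ : Euc n) (hz₀ : z₀ ∈ K) (hfz₀ : f xb z₀ = 0)
    (D : Euc n → Euc n → Euc m)
    (hDcont : ∀ z ∈ K, Continuous (D z))
    (hDph : ∀ z ∈ K, ∀ t : ℝ, 0 < t → ∀ v, D z (t • v) = t • D z v)
    (hStrict : ∀ ε > (0:ℝ), ∃ δ > (0:ℝ), ∀ x₁ ∈ ball xb δ, ∀ x₂ ∈ ball xb δ, ∀ z ∈ K,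
      ‖f x₁ z - f x₂ z - D z (x₁ - x₂)‖ ≤ ε * ‖x₁ - x₂‖)
    (hEqui : Equicontinuous (fun z : {z // z ∈ K} => D z.1))
 :
    contCone (Equi f C K) xb ⊆ D z₀ ⁻¹' C ∩ contCone K xb := by
  rintro v ⟨vs, ts, hvs, hts, htpos, hmem⟩
  constructor
  · -- D z₀ v ∈ C
    show D z₀ v ∈ C
    rw [← hCclosed.closure_eq]
    rw [mem_closure_iff_nhds_basis Metric.nhds_basis_ball]
    intro ε' hε'
    set ε := ε' / (2 * (‖v‖ + 1)) with hεdef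
    have hvpos : (0:ℝ) < ‖v‖ + 1 := by positivity
    have hε : 0 < ε := by positivity
    obtain ⟨δ, hδ, hδprop⟩ := hStrict ε hε
    -- eventually conditions
    have h1 : Tendsto (fun k => ts k • vs k) atTop (𝓝 0) := by
      have := hts.smul hvs
      simpa using this
    have h2 : ∀ᶠ k in atTop, ‖ts k • vs k‖ < δ := by
      have h1n : Tendsto (fun k => ‖ts k • vs k‖) atTop (𝓝 0) := by simpa using h1.norm
      exact h1n.eventually (eventually_lt_nhds hδ)
    have h3 : Tendsto (fun k => D z₀ (vs k)) atTop (𝓝 (D z₀ v)) :=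
      ((hDcont z₀ hz₀).continuousAt.tendsto).comp hvs
    have h4 : ∀ᶠ k in atTop, ‖D z₀ (vs k) - D z₀ v‖ < ε' / 2 := by
      have hn : Tendsto (fun k => ‖D z₀ (vs k) - D z₀ v‖) atTop (𝓝 0) := by
        simpa using (tendsto_sub_nhds_zero_iff.mpr h3).norm
      exact hn.eventually (eventually_lt_nhds (by positivity))
    have h5 : ∀ᶠ k in atTop, ‖vs k‖ < ‖v‖ + 1 :=
      hvs.norm.eventually (eventually_lt_nhds (by linarith))
    obtain ⟨k, hk2, hk4, hk5⟩ := (h2.and (h4.and h5)).exists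
    set xk := xb + ts k • vs k with hxk
    have hxkEqui := hmem k
    have hxkball : xk ∈ ball xb δ := by
      simp [hxk, mem_ball, dist_eq_norm]
      simpa using hk2
    have hxbball : xb ∈ ball xb δ := mem_ball_self hδ
    have hfk : f xk z₀ ∈ C := hxkEqui.2 z₀ hz₀
    have hest := hδprop xk hxkball xb hxbball z₀ hz₀
    have hsub : xk - xb = ts k • vs k := by simp [hxk]
    rw [hsub, hfz₀, hDph z₀ hz₀ (ts k) (htpos k) (vs k)] at hest
    have htk := htpos k
    -- c := (ts k)⁻¹ • f xk z₀ ∈ C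
    refine ⟨(ts k)⁻¹ • f xk z₀, hCcone _ hfk _ (inv_pos.mpr htk), ?_⟩
    rw [mem_ball, dist_eq_norm, norm_sub_rev]
    have hnorm : ‖ts k • vs k‖ = ts k * ‖vs k‖ := by
      rw [norm_smul, Real.norm_eq_abs, abs_of_pos htk]
    rw [hnorm] at hest
    have hDc : ‖D z₀ (vs k) - (ts k)⁻¹ • f xk z₀‖ ≤ ε * ‖vs k‖ := by
      have hkey : D z₀ (vs k) - (ts k)⁻¹ • f xk z₀
          = -((ts k)⁻¹ • (f xk z₀ - (0:Euc m) - ts k • D z₀ (vs k))) := by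
        rw [smul_sub, smul_sub, inv_smul_smul₀ (ne_of_gt htk)]
        simp
      rw [hkey, norm_neg, norm_smul, Real.norm_eq_abs, abs_of_pos (inv_pos.mpr htk)]
      calc (ts k)⁻¹ * ‖f xk z₀ - 0 - ts k • D z₀ (vs k)‖
          ≤ (ts k)⁻¹ * (ε * (ts k * ‖vs k‖)) :=
            mul_le_mul_of_nonneg_left hest (le_of_lt (inv_pos.mpr htk))
        _ = ε * ‖vs k‖ := by field_simp
    have heq : ε * (‖v‖ + 1) = ε' / 2 := by
      rw [hεdef]; field_simp
    have hDc2 : ε * ‖vs k‖ < ε' / 2 := by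
      calc ε * ‖vs k‖ < ε * (‖v‖ + 1) := mul_lt_mul_of_pos_left hk5 hε
        _ = ε' / 2 := heq
    calc ‖D z₀ v - (ts k)⁻¹ • f xk z₀‖
        ≤ ‖D z₀ v - D z₀ (vs k)‖ + ‖D z₀ (vs k) - (ts k)⁻¹ • f xk z₀‖ :=
          norm_sub_le_norm_sub_add_norm_sub _ _ _
      _ < ε' := by rw [norm_sub_rev] at hk4; linarith
  · exact ⟨vs, ts, hvs, hts, htpos, fun k => (hmem k).1⟩
end
end
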